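/- arXiv:1607.06411 — 7 statements merged into one kernel-verified Lean document; each statement's English description precedes it below -/
import Mathlib

section
/- Let a be a finite-dimensional Lie algebra over a field F of characteristic zero, B a commutative associative unital F-algebra, and s an indeterminate. Then for all P ∈ S(a)⊗B, F ∈ a*⊗B, and X ∈ a⊗B, one has P(F + s(X·F)) ≡ P(F) − s·(X·P)(F) mod s²B[s], where both sides are computed in B[s]. -/
open MvPolynomial

/-- The extension of the assignment `X j ↦ v j` on variables to a derivation of the
polynomial ring: `p ↦ ∑ j, v j * ∂p/∂X j`.  This models the extension of a Lie algebra
action on a vector space to an action on its symmetric algebra by derivations, where the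
symmetric algebra of a finite-dimensional space with basis indexed by `σ` is modeled as
`MvPolynomial σ R`. -/
noncomputable def extDer {R : Type*} [CommSemiring R] {σ : Type*} [Fintype σ]
    (v : σ → MvPolynomial σ R) (p : MvPolynomial σ R) : MvPolynomial σ R :=
  ∑ j, v j * pderiv j p

lemma taylor_aux {B : Type*} [CommRing B] {ι : Type*} [Fintype ι] (f g : ι → B)
    (p : MvPolynomial ι B) :
    ∃ Q : Polynomial B,
      aeval (fun i => Polynomial.C (f i) + Polynomial.X * Polynomial.C (g i)) p
        - (Polynomial.C (eval f p)
            + Polynomial.X * Polynomial.C (∑ j, g j * eval f (pderiv j p)))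
      = Polynomial.X ^ 2 * Q := by
  classical
  induction p using MvPolynomial.induction_on with
  | C a => exact ⟨0, by simp⟩
  | add p q hp hq =>
    obtain ⟨Q1, h1⟩ := hp
    obtain ⟨Q2, h2⟩ := hq
    refine ⟨Q1 + Q2, ?_⟩
    simp only [map_add, mul_add, Finset.sum_add_distrib, Polynomial.C_add]
    linear_combination h1 + h2
  | mul_X p i hp =>
    obtain ⟨Q, h⟩ := hp
    refine ⟨Q * (Polynomial.C (f i) + Polynomial.X * Polynomial.C (g i))
      + Polynomial.C ((∑ j, g j * eval f (pderiv j p)) * g i), ?_⟩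
    have hsum : ∑ j, g j * eval f (pderiv j (p * X i))
        = (∑ j, g j * eval f (pderiv j p)) * f i + g i * eval f p := by
      simp only [pderiv_mul, pderiv_X, map_add, eval_mul, eval_X, mul_add,
        Finset.sum_add_distrib, Pi.single_apply, apply_ite (eval f), map_zero, mul_ite,
        mul_zero, Finset.sum_ite_eq, Finset.mem_univ, if_true, Finset.sum_mul, map_one,
        mul_one, mul_assoc]
    rw [map_mul, hsum, eval_mul, eval_X]
    simp only [aeval_X, Polynomial.C_add, Polynomial.C_mul]
    linear_combination (Polynomial.C (f i) + Polynomial.X * Polynomial.C (g i)) * h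

/-- Let `a` be a finite-dimensional Lie algebra over a field `F` of
characteristic zero (with basis `ba` indexed by `ι`, so that `S(a)` is modeled as
`MvPolynomial ι F` with the variable `X j` corresponding to `ba j`, and `S(a) ⊗ B` as
`MvPolynomial ι B`), let `B` be a commutative associative unital `F`-algebra and `s` an
indeterminate.  For all `P ∈ S(a) ⊗ B`, `F ∈ a* ⊗ B` (modeled, via finite-dimensionality
of `a`, as a linear map `Fm : a →ₗ[F] B`) and `X = ∑ m, x m ⊗ b m ∈ a ⊗ B`, one has
`P(F + s (X·F)) ≡ P(F) - s (X·P)(F) mod s² B[s]`, both sides computed in `B[s]`.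
Here `X·F ∈ a* ⊗ B` is the coadjoint action, `(x ⊗ b₁)·(f ⊗ b₂) = (x·f) ⊗ b₁b₂` with
`(x·f)(y) = f ⁅y, x⁆`, and `X·P ∈ S(a) ⊗ B` is the action extending the adjoint action by
derivations, `(x ⊗ b₁)·(p ⊗ b₂) = (x·p) ⊗ b₁b₂`. -/
theorem statement0 {F : Type*} [Field F] [CharZero F]
    {a : Type*} [LieRing a] [LieAlgebra F a] [FiniteDimensional F a]
    {B : Type*} [CommRing B] [Algebra F B]
    {ι : Type*} [Fintype ι] (ba : Module.Basis ι F a)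
    (n : ℕ) (x : Fin n → a) (b : Fin n → B)
    (Fm : a →ₗ[F] B)
    (P : MvPolynomial ι B)
    -- `XF` is the element `X · F` of `a* ⊗ B`, viewed as a linear map `a → B`:
    (XF : a → B) (hXF : XF = fun y => ∑ m, b m * Fm ⁅y, x m⁆)
    -- `XP` is the element `X · P` of `S(a) ⊗ B`:
    (XP : MvPolynomial ι B)
    (hXP : XP = ∑ m, C (b m) *
      extDer (fun j => ∑ j', (ba.repr ⁅x m, ba j⁆ j') • (X j' : MvPolynomial ι B)) P) :
    ∃ Q : Polynomial B,
      aeval (fun i => Polynomial.C (Fm (ba i)) + Polynomial.X * Polynomial.C (XF (ba i))) P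
        - (Polynomial.C (eval (fun i => Fm (ba i)) P)
            - Polynomial.X * Polynomial.C (eval (fun i => Fm (ba i)) XP))
      = Polynomial.X ^ 2 * Q := by
  set f : ι → B := fun i => Fm (ba i) with hf
  have hv : ∀ y : a, eval f (∑ j', (ba.repr y j') • (X j' : MvPolynomial ι B)) = Fm y := by
    intro y
    rw [map_sum]
    conv_rhs => rw [← ba.sum_repr y, map_sum]
    refine Finset.sum_congr rfl fun j' _ => ?_
    rw [← algebraMap_smul B (ba.repr y j') (X j' : MvPolynomial ι B), smul_eval, map_smul,
      Algebra.smul_def]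
    simp [hf]
  have key : eval f XP = - ∑ j, XF (ba j) * eval f (pderiv j P) := by
    subst hXP hXF
    simp only [map_sum, eval_mul, eval_C, extDer, hv]
    simp only [Finset.mul_sum, Finset.sum_mul]
    rw [Finset.sum_comm, ← Finset.sum_neg_distrib]
    refine Finset.sum_congr rfl fun j _ => ?_
    rw [← Finset.sum_neg_distrib]
    refine Finset.sum_congr rfl fun m _ => ?_
    rw [← lie_skew, map_neg]
    ring
  obtain ⟨Q, h⟩ := taylor_aux f (fun i => XF (ba i)) P
  refine ⟨Q, ?_⟩
  rw [key, ← h]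
  simp only [map_neg, Polynomial.C_neg]
  ring
end

section
/- For every p ∈ S(g) and every F ∈ g*⊗A*, one has p(ȷ(F)) = Σ_{γ∈ℕ^ℓ} p_γ(F)·q^{−γ} in F[Γ], where p(ȷ(F)) is the value at ȷ(F) of p viewed as a polynomial function on g*⊗F[Γ] with values in F[Γ], and p_γ(F) ∈ F is the evaluation of p_γ ∈ S(g⊗A) at F ∈ (g⊗A)* ≅ g*⊗A*. -/
open MvPolynomial

/-- Coercion of a multi-exponent in `ℕ^ℓ` to `ℤ^ℓ`. -/
def zc {ℓ : ℕ} (ω : Fin ℓ → ℕ) : Fin ℓ → ℤ := fun k => (ω k : ℤ)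

/-- The algebra homomorphism `τ_a : S(g) → S(g ⊗ A)` induced by `x ↦ x ⊗ a` where
`a = ∑_{ω ∈ Ω₁} τ^ω`.  Here `S(g)` is modeled as `MvPolynomial ι F` (the variable `X i`
corresponding to the basis vector `bg i` of `g`) and `S(g ⊗ A)` as
`MvPolynomial (ι × Ω₁) F` (the variable `X (i, ω)` corresponding to `bg i ⊗ τ^ω`,
where `{τ^ω : ω ∈ Ω₁}` is the monomial basis of `A = F[t₁,…,t_ℓ]/⟨t^ω : ω ∈ Ω₀⟩`). -/
noncomputable def tauA (F : Type*) [Field F] {ℓ : ℕ} (Ω₁ : Finset (Fin ℓ → ℕ))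
    (ι : Type*) : MvPolynomial ι F →ₐ[F] MvPolynomial (ι × ↥Ω₁) F :=
  aeval (fun i => ∑ ω : ↥Ω₁, X (i, ω))

/-- `pComp F Ω₁ p γ` is the component `p_γ` of `τ_a(p)` of degree `γ ∈ ℤ^ℓ`, with respect
to the `ℤ^ℓ`-grading of `S(g ⊗ A)` induced by that of `A` (the variable `X (i, ω)`,
corresponding to `bg i ⊗ τ^ω`, has degree `ω`). -/
noncomputable def pComp (F : Type*) [Field F] {ℓ : ℕ} (Ω₁ : Finset (Fin ℓ → ℕ))
    {ι : Type*} (p : MvPolynomial ι F) (γ : Fin ℓ → ℤ) : MvPolynomial (ι × ↥Ω₁) F :=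
  weightedHomogeneousComponent (fun z : ι × ↥Ω₁ => zc (z.2 : Fin ℓ → ℕ)) γ (tauA F Ω₁ ι p)

section Aux

variable {F : Type*} [Field F] {ℓ : ℕ} {σ : Type*}

lemma aux_mono (w : σ → Fin ℓ → ℤ) (v : σ → F) (e : σ →₀ ℕ) (c : F) :
    aeval (fun z => AddMonoidAlgebra.single (-(w z)) (v z)) (monomial e c)
      = AddMonoidAlgebra.single (-(Finsupp.weight w e)) (eval v (monomial e c)) := by
  rw [aeval_monomial, eval_monomial]
  simp only [Finsupp.prod, AddMonoidAlgebra.single_pow, AddMonoidAlgebra.prod_single,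
    AddMonoidAlgebra.coe_algebraMap, Function.comp_apply, Algebra.algebraMap_self_apply]
  rw [AddMonoidAlgebra.single_mul_single, zero_add]
  congr 1
  rw [Finsupp.weight_apply, Finsupp.sum, ← Finset.sum_neg_distrib]
  exact Finset.sum_congr rfl fun i _ => smul_neg _ _

lemma aux_homog (w : σ → Fin ℓ → ℤ) (v : σ → F) {d : Fin ℓ → ℤ}
    {r : MvPolynomial σ F} (hr : r.IsWeightedHomogeneous w d) :
    aeval (fun z => AddMonoidAlgebra.single (-(w z)) (v z)) r
      = AddMonoidAlgebra.single (-d) (eval v r) := by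
  have h2 : (eval v) r = ∑ e ∈ r.support, eval v (monomial e (coeff e r)) := by
    conv_lhs => rw [r.as_sum]
    rw [map_sum]
  conv_lhs => rw [r.as_sum]
  rw [map_sum, h2]
  rw [show AddMonoidAlgebra.single (-d) (∑ e ∈ r.support, eval v (monomial e (coeff e r)))
      = ∑ e ∈ r.support, AddMonoidAlgebra.single (-d) (eval v (monomial e (coeff e r))) from
    map_sum (AddMonoidAlgebra.singleAddHom (-d)) _ _]
  refine Finset.sum_congr rfl fun e he => ?_
  rw [aux_mono, hr (mem_support_iff.mp he)]

lemma aux_all (w : σ → Fin ℓ → ℤ) (v : σ → F) (r : MvPolynomial σ F) :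
    aeval (fun z => AddMonoidAlgebra.single (-(w z)) (v z)) r
      = ∑ᶠ d : Fin ℓ → ℤ, AddMonoidAlgebra.single (-d)
          (eval v (weightedHomogeneousComponent w d r)) := by
  have hfin := weightedHomogeneousComponent_finsupp (w := w) (φ := r)
  conv_lhs => rw [← sum_weightedHomogeneousComponent w r, finsum_eq_sum _ hfin]
  rw [map_sum]
  rw [Finset.sum_congr rfl fun d _ =>
    aux_homog w v (weightedHomogeneousComponent_isWeightedHomogeneous d r)]
  refine (finsum_eq_finset_sum_of_support_subset _ ?_).symm
  intro d hd
  simp only [Function.mem_support, ne_eq] at hd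
  refine (Set.Finite.mem_toFinset (hs := hfin)).mpr ?_
  intro hzero
  apply hd
  rw [show weightedHomogeneousComponent w d r = 0 from hzero]
  simp

end Aux

/-- For every `p ∈ S(g)` and every `F ∈ g* ⊗ A*` (written
`F = ∑_{ω ∈ Ω₁} f ω ⊗ ε^ω` in terms of the dual basis `{ε^ω}` of `A*`), one has
`p(ȷ(F)) = ∑_{γ ∈ ℕ^ℓ} p_γ(F) q^{-γ}` in the group algebra `F[Γ] = F[ℤ^ℓ]`.
Here `ȷ : g* ⊗ A* → g* ⊗ F[Γ]` sends `f ⊗ ε^ω ↦ f ⊗ q^{-ω}`, `p(ȷ(F))` is the value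
at `ȷ(F)` of `p` viewed as a polynomial function on `g* ⊗ F[Γ]` with values in `F[Γ]`
(an element of `g* ⊗ F[Γ]` induces an algebra homomorphism `S(g) → F[Γ]` determined by
`x ↦ ∑ᵢ fᵢ(x) bᵢ`), and `p_γ(F) ∈ F` is the evaluation of `p_γ ∈ S(g ⊗ A)` at
`F ∈ (g ⊗ A)* ≅ g* ⊗ A*` (so the variable corresponding to `bg i ⊗ τ^ω` takes the value
`f ω (bg i)`).  The group algebra `F[ℤ^ℓ]` is modeled as `AddMonoidAlgebra F (Fin ℓ → ℤ)`
with `q^γ = AddMonoidAlgebra.single γ 1`, so that `c • q^{-γ} = AddMonoidAlgebra.single (-γ) c`. -/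
theorem statement1 {F : Type*} [Field F] [CharZero F] {ℓ : ℕ}
    (Ω₁ : Finset (Fin ℓ → ℕ))
    (hstab : ∀ ω γ : Fin ℓ → ℕ, ω ∉ Ω₁ → ω + γ ∉ Ω₁)
    {g : Type*} [LieRing g] [LieAlgebra F g] [FiniteDimensional F g]
    {ι : Type*} [Fintype ι] (bg : Module.Basis ι F g)
    (p : MvPolynomial ι F) (f : ↥Ω₁ → Module.Dual F g) :
    aeval (fun i => ∑ ω : ↥Ω₁,
        AddMonoidAlgebra.single (-(zc (ω : Fin ℓ → ℕ))) (f ω (bg i))) p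
      = ∑ᶠ γ : Fin ℓ → ℕ, AddMonoidAlgebra.single (-(zc γ))
          (eval (fun z : ι × ↥Ω₁ => f z.2 (bg z.1)) (pComp F Ω₁ p (zc γ))) := by
    classical
  set w : ι × ↥Ω₁ → Fin ℓ → ℤ := fun z => zc (z.2 : Fin ℓ → ℕ) with hw
  set v : ι × ↥Ω₁ → F := fun z => f z.2 (bg z.1) with hv
  have h1 : aeval (fun z : ι × ↥Ω₁ => AddMonoidAlgebra.single (-(w z)) (v z))
        (tauA F Ω₁ ι p)
      = aeval (fun i => ∑ ω : ↥Ω₁,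
          AddMonoidAlgebra.single (-(zc (ω : Fin ℓ → ℕ))) (f ω (bg i))) p := by
    rw [tauA, ← AlgHom.comp_apply, comp_aeval]
    refine congrArg (fun u => aeval (R := F) u p) (funext fun i => ?_)
    rw [map_sum]
    simp [aeval_X]
    rfl
  rw [← h1, aux_all w v]
  set h : (Fin ℓ → ℤ) → AddMonoidAlgebra F (Fin ℓ → ℤ) := fun d =>
    AddMonoidAlgebra.single (-d)
      (eval v (weightedHomogeneousComponent w d (tauA F Ω₁ ι p))) with hh
  have hzc : Function.Injective (zc (ℓ := ℓ)) := fun a b hab =>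
    funext fun k => Nat.cast_injective (congrFun hab k)
  have hsupp : Function.support h ⊆ Set.range zc := by
    intro d hd
    by_contra hrange
    apply hd
    have hzero : weightedHomogeneousComponent w d (tauA F Ω₁ ι p) = 0 := by
      apply weightedHomogeneousComponent_eq_zero'
      intro e _ hwe
      apply hrange
      refine ⟨fun k => (d k).toNat, funext fun k => ?_⟩
      have hnn : 0 ≤ d k := by
        rw [← hwe, Finsupp.weight_apply, Finsupp.sum, Finset.sum_apply]
        refine Finset.sum_nonneg fun z _ => ?_
        simp only [Pi.smul_apply, hw, zc, smul_eq_mul]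
        positivity
      simp [zc, Int.toNat_of_nonneg hnn]
    simp [hh, hzero]
  calc (∑ᶠ d : Fin ℓ → ℤ, h d) = ∑ᶠ d ∈ Set.univ, h d := (finsum_mem_univ h).symm
    _ = ∑ᶠ d ∈ Set.range zc, h d := finsum_mem_inter_support_eq h _ _
        (by rw [Set.univ_inter, Set.inter_eq_right.mpr hsupp])
    _ = ∑ᶠ γ : Fin ℓ → ℕ, h (zc γ) := finsum_mem_range hzc
    _ = _ := finsum_congr fun γ => rfl
end

section
/- Assume Ω₁ has a greatest element μ. Let ν = (μ₁,…,μ_{ℓ−1}) and B = F[t₁,…,t_{ℓ−1}]/⟨t^ω : ω ≰ ν⟩, and identify A with B⊗F[t_ℓ]/(t_ℓ^{μ_ℓ+1}). Then for every p ∈ S(g) and every γ = (γ₁,…,γ_ℓ) ∈ ℕ^ℓ, one has (p_{(γ₁,…,γ_{ℓ−1})})_{γ_ℓ} = p_γ, where p_{(γ₁,…,γ_{ℓ−1})} ∈ S(g⊗B) is formed by the same construction applied to g and B, and the outer subscript is the construction applied to the finite-dimensional Lie algebra g⊗B and the truncated polynomial ring F[t_ℓ]/(t_ℓ^{μ_ℓ+1}).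 -/
open MvPolynomial

/-- The algebra homomorphism `S(h) → S(h ⊗ C)` induced by `x ↦ x ⊗ c`, where
`C = F[t₁,…,t_n]/⟨t^ω : ω ≰ μ⟩` is the truncated polynomial algebra with monomial basis
`{τ^ω : ω ≤ μ}` (indexed by `∀ k, Fin (μ k + 1)`) and `c = ∑_{ω ≤ μ} τ^ω`.  Here `S(h)`
is modeled as `MvPolynomial σ F` (variables indexed by a basis of `h`) and `S(h ⊗ C)` as
`MvPolynomial (σ × ∀ k, Fin (μ k + 1)) F` (the variable `X (s, ω)` corresponding to the
basis vector `s ⊗ τ^ω`). -/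
noncomputable def tauMul {F : Type*} [Field F] {σ : Type*} {n : ℕ} (μ : Fin n → ℕ) :
    MvPolynomial σ F →ₐ[F] MvPolynomial (σ × (∀ k, Fin (μ k + 1))) F :=
  aeval fun s => ∑ ω : ∀ k, Fin (μ k + 1), X (s, ω)

/-- `compMul μ p γ` is the component `p_γ` of degree `γ ∈ ℕ^n` of the image of `p` under
`tauMul μ`, with respect to the `ℕ^n`-grading in which `X (s, ω)` has degree `ω`. -/
noncomputable def compMul {F : Type*} [Field F] {σ : Type*} {n : ℕ} (μ : Fin n → ℕ)
    (p : MvPolynomial σ F) (γ : Fin n → ℕ) : MvPolynomial (σ × (∀ k, Fin (μ k + 1))) F :=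
  weightedHomogeneousComponent (fun z : σ × (∀ k, Fin (μ k + 1)) => fun k => (z.2 k : ℕ))
    γ (tauMul μ p)

/-- The one-variable (`n = 1`) version of `tauMul`:
the homomorphism `S(h) → S(h ⊗ F[t]/(t^{m+1}))`. -/
noncomputable def tauOne {F : Type*} [Field F] {σ : Type*} (m : ℕ) :
    MvPolynomial σ F →ₐ[F] MvPolynomial (σ × Fin (m + 1)) F :=
  aeval fun s => ∑ j : Fin (m + 1), X (s, j)

/-- The one-variable version of `compMul`: the degree-`d` component for the `ℕ`-grading. -/
noncomputable def compOne {F : Type*} [Field F] {σ : Type*} (m : ℕ)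
    (p : MvPolynomial σ F) (d : ℕ) : MvPolynomial (σ × Fin (m + 1)) F :=
  weightedHomogeneousComponent (fun z : σ × Fin (m + 1) => (z.2 : ℕ)) d (tauOne m p)

/-- The bijection of variable-index sets realizing the identification
`A ≅ B ⊗ F[t_ℓ]/(t_ℓ^{μ_ℓ+1})`, where `A` has monomial basis indexed by `ω ≤ μ`
(`ω ∈ ℕ^{ℓ+1}`) and `B` has monomial basis indexed by `ω' ≤ (μ₁,…,μ_ℓ)`. -/
def snocEquiv {σ : Type*} {ℓ : ℕ} (μ : Fin (ℓ + 1) → ℕ) :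
    ((σ × (∀ k : Fin ℓ, Fin (Fin.init μ k + 1))) × Fin (μ (Fin.last ℓ) + 1))
      ≃ (σ × (∀ k : Fin (ℓ + 1), Fin (μ k + 1))) where
  toFun z := (z.1.1, Fin.snoc z.1.2 z.2)
  invFun z := ((z.1, fun k => z.2 k.castSucc), z.2 (Fin.last ℓ))
  left_inv z := by
    obtain ⟨⟨s, ω⟩, d⟩ := z
    simp
    first
      | exact ⟨Prod.ext rfl (funext fun k => Fin.snoc_castSucc ..), Fin.snoc_last ..⟩
      | exact ⟨Prod.ext rfl (funext fun k => Fin.snoc_castSucc (α := fun k => Fin (μ k + 1)) ..),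
          Fin.snoc_last (α := fun k => Fin (μ k + 1)) ..⟩
  right_inv z := by
    obtain ⟨s, ω⟩ := z
    exact congrArg (Prod.mk s) (Fin.snoc_init_self ω)

private theorem pow_hom {R σ M : Type*} [CommSemiring R] [AddCommMonoid M]
    {w : σ → M} {q : MvPolynomial σ R} {m : M} (h : q.IsWeightedHomogeneous w m) (n : ℕ) :
    (q ^ n).IsWeightedHomogeneous w (n • m) := by
  induction n with
  | zero => simpa using isWeightedHomogeneous_one R w
  | succ k ih => rw [pow_succ, succ_nsmul]; exact ih.mul h

private theorem wHC_aeval {R σ τ M : Type*} [CommRing R] [AddCommMonoid M] [DecidableEq M]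
    (w : σ → M) (w' : τ → M) (v : σ → MvPolynomial τ R)
    (hv : ∀ s, (v s).IsWeightedHomogeneous w' (w s)) (d : M) (q : MvPolynomial σ R) :
    weightedHomogeneousComponent w' d (aeval v q) =
      aeval v (weightedHomogeneousComponent w d q) := by
  induction q using MvPolynomial.induction_on' with
  | add p q ihp ihq => rw [map_add, map_add, ihp, ihq, ← map_add, ← map_add]
  | monomial e r =>
    have hhom : (aeval v (monomial e r) : MvPolynomial τ R).IsWeightedHomogeneous w'
        (Finsupp.weight w e) := by
      rw [aeval_monomial]
      have h0 : (Finsupp.weight w e : M) = 0 + ∑ s ∈ e.support, (e s) • w s := by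
        rw [zero_add, Finsupp.weight_apply, Finsupp.sum]
      rw [h0, Finsupp.prod]
      exact (isWeightedHomogeneous_C _ _).mul
        (IsWeightedHomogeneous.prod _ _ _ fun s _ => pow_hom (hv s) (e s))
    have hmon : (monomial e r : MvPolynomial σ R).IsWeightedHomogeneous w (Finsupp.weight w e) :=
      isWeightedHomogeneous_monomial _ _ _ rfl
    by_cases hd : Finsupp.weight w e = d
    · subst hd
      rw [hhom.weightedHomogeneousComponent_same, hmon.weightedHomogeneousComponent_same]
    · rw [hhom.weightedHomogeneousComponent_ne d (Ne.symm hd),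
        hmon.weightedHomogeneousComponent_ne d (Ne.symm hd), map_zero]

private def sE {ℓ : ℕ} (μ : Fin (ℓ + 1) → ℕ) :
    ((∀ k : Fin ℓ, Fin (Fin.init μ k + 1)) × Fin (μ (Fin.last ℓ) + 1))
      ≃ (∀ k : Fin (ℓ + 1), Fin (μ k + 1)) where
  toFun z := Fin.snoc z.1 z.2
  invFun ω := (fun k => ω k.castSucc, ω (Fin.last ℓ))
  left_inv z := by
    obtain ⟨ω, d⟩ := z; simp
    exact Prod.ext (funext fun k => Fin.snoc_castSucc (α := fun k => Fin (μ k + 1)) ..)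
      (Fin.snoc_last (α := fun k => Fin (μ k + 1)) ..)
  right_inv ω := Fin.snoc_init_self ω

private theorem weight_mapDomain {σ τ M : Type*} [AddCommMonoid M] (f : σ → τ) (w : τ → M)
    (d : σ →₀ ℕ) :
    Finsupp.weight w (Finsupp.mapDomain f d) = Finsupp.weight (w ∘ f) d := by
  rw [Finsupp.weight_apply, Finsupp.weight_apply]
  exact Finsupp.sum_mapDomain_index (fun b => zero_smul _ _) (fun b m n => add_smul _ _ _)

private theorem weight_coord {σ n : Type*} [Fintype n] (w : σ → n → ℕ) (d : σ →₀ ℕ) (k : n) :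
    Finsupp.weight w d k = Finsupp.weight (fun z => w z k) d := by
  rw [Finsupp.weight_apply, Finsupp.weight_apply, Finsupp.sum, Finsupp.sum,
    Finset.sum_apply]
  rfl


/-- Assume `Ω₁ = {ω ∈ ℕ^{ℓ+1} : ω ≤ μ}` has greatest element `μ`, so
that `A ≅ B ⊗ F[t_{ℓ+1}]/(t_{ℓ+1}^{μ_{ℓ+1}+1})` where `B` is the truncated algebra for
`ν = Fin.init μ = (μ₁,…,μ_ℓ)`.  Then for every `p ∈ S(g)` and every
`γ ∈ ℕ^{ℓ+1}`, one has `(p_{(γ₁,…,γ_ℓ)})_{γ_{ℓ+1}} = p_γ`, where `p_{(γ₁,…,γ_ℓ)} ∈ S(g ⊗ B)`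
is formed by the same construction applied to `g` and `B`, and the outer subscript is the
construction applied to the finite-dimensional Lie algebra `g ⊗ B` and the truncated
polynomial ring `F[t_{ℓ+1}]/(t_{ℓ+1}^{μ_{ℓ+1}+1})`.  The two sides are compared via the
renaming of variables `snocEquiv μ` realizing the identification of `A` with
`B ⊗ F[t_{ℓ+1}]/(t_{ℓ+1}^{μ_{ℓ+1}+1})`. -/
theorem statement2 {F : Type*} [Field F] [CharZero F]
    {g : Type*} [LieRing g] [LieAlgebra F g] [FiniteDimensional F g]
    {ι : Type*} [Fintype ι] (bg : Module.Basis ι F g)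
    {ℓ : ℕ} (μ : Fin (ℓ + 1) → ℕ)
    (p : MvPolynomial ι F) (γ : Fin (ℓ + 1) → ℕ) :
    rename (snocEquiv μ)
        (compOne (μ (Fin.last ℓ)) (compMul (Fin.init μ) p (Fin.init γ)) (γ (Fin.last ℓ)))
      = compMul μ p γ := by
  classical
  set m := μ (Fin.last ℓ) with hmdef
  set ν := Fin.init μ with hν
  -- weight functions
  set wfull : (ι × (∀ k : Fin (ℓ + 1), Fin (μ k + 1))) → (Fin (ℓ + 1) → ℕ) :=
    fun z k => (z.2 k : ℕ) with hwfull
  set wν : (ι × (∀ k : Fin ℓ, Fin (ν k + 1))) → (Fin ℓ → ℕ) := fun z k => (z.2 k : ℕ) with hwν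
  set wν' : ((ι × (∀ k : Fin ℓ, Fin (ν k + 1))) × Fin (m + 1)) → (Fin ℓ → ℕ) :=
    fun z => wν z.1 with hwν'
  set u : ((ι × (∀ k : Fin ℓ, Fin (ν k + 1))) × Fin (m + 1)) → ℕ := fun z => (z.2 : ℕ) with hu
  set T : MvPolynomial ((ι × (∀ k : Fin ℓ, Fin (ν k + 1))) × Fin (m + 1)) F :=
    tauOne m (tauMul ν p) with hT
  -- Step 3: tauOne commutes with the inner component
  have hv : ∀ s : ι × (∀ k : Fin ℓ, Fin (ν k + 1)),
      IsWeightedHomogeneous wν' (∑ j : Fin (m + 1), (X (s, j) : MvPolynomial _ F)) (wν s) :=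
    fun s => IsWeightedHomogeneous.sum _ _ _ fun j _ => isWeightedHomogeneous_X _ _ _
  have h3' : (tauOne m) (weightedHomogeneousComponent wν (Fin.init γ) (tauMul ν p)) =
      weightedHomogeneousComponent wν' (Fin.init γ) T :=
    (wHC_aeval wν wν' (fun s => ∑ j : Fin (m + 1), X (s, j)) hv (Fin.init γ) (tauMul ν p)).symm
  have h3 : compOne m (compMul ν p (Fin.init γ)) (γ (Fin.last ℓ)) =
      weightedHomogeneousComponent u (γ (Fin.last ℓ))
        (weightedHomogeneousComponent wν' (Fin.init γ) T) := by
    unfold compOne compMul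
    rw [h3']
  -- Step 1: the composite substitution equals tauMul μ
  have h1 : ∀ q : MvPolynomial ι F,
      rename (⇑(snocEquiv μ)) (tauOne m (tauMul ν q)) = tauMul μ q := by
    have hcomp : ((rename (R := F) (⇑(snocEquiv (σ := ι) μ))).comp
        ((tauOne m).comp (tauMul ν))) = tauMul μ := by
      apply MvPolynomial.algHom_ext
      intro s
      simp only [AlgHom.comp_apply, tauMul, tauOne, aeval_X, map_sum, rename_X]
      rw [← Fintype.sum_equiv (sE μ) (fun z => (X (s, Fin.snoc z.1 z.2) :
          MvPolynomial (ι × (∀ k : Fin (ℓ + 1), Fin (μ k + 1))) F)) (fun ω => X (s, ω))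
          (fun z => rfl), Fintype.sum_prod_type]
      rfl
    intro q
    exact DFunLike.congr_fun hcomp q
  rw [h3]
  show rename (⇑(snocEquiv μ)) _ = weightedHomogeneousComponent wfull γ (tauMul μ p)
  ext x
  set d' : ((ι × (∀ k : Fin ℓ, Fin (ν k + 1))) × Fin (m + 1)) →₀ ℕ :=
    Finsupp.mapDomain (⇑(snocEquiv μ).symm) x with hd'
  have hx : Finsupp.mapDomain (⇑(snocEquiv μ)) d' = x := by
    rw [hd', ← Finsupp.mapDomain_comp, Equiv.self_comp_symm, Finsupp.mapDomain_id]
  have hA : coeff x (tauMul μ p) = coeff d' T := by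
    rw [← h1 p, ← hx, coeff_rename_mapDomain _ (snocEquiv μ).injective]
  have hL : coeff x (rename (⇑(snocEquiv μ))
      (weightedHomogeneousComponent u (γ (Fin.last ℓ))
        (weightedHomogeneousComponent wν' (Fin.init γ) T)))
      = coeff d' (weightedHomogeneousComponent u (γ (Fin.last ℓ))
        (weightedHomogeneousComponent wν' (Fin.init γ) T)) := by
    rw [← hx, coeff_rename_mapDomain _ (snocEquiv μ).injective]
  rw [hL, coeff_weightedHomogeneousComponent, coeff_weightedHomogeneousComponent,
    coeff_weightedHomogeneousComponent, hA]
  -- now compare the conditions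
  have hfu : ((fun z => wfull z (Fin.last ℓ)) ∘ ⇑(snocEquiv μ)) = u := by
    funext z
    show ((Fin.snoc z.1.2 z.2 : ∀ k : Fin (ℓ + 1), Fin (μ k + 1)) (Fin.last ℓ) : ℕ) = (z.2 : ℕ)
    exact congrArg Fin.val (Fin.snoc_last (α := fun k => Fin (μ k + 1)) ..)
  have hfi : ∀ k : Fin ℓ, ((fun z => wfull z k.castSucc) ∘ ⇑(snocEquiv μ))
      = (fun z => wν' z k) := by
    intro k
    funext z
    show ((Fin.snoc z.1.2 z.2 : ∀ k : Fin (ℓ + 1), Fin (μ k + 1)) k.castSucc : ℕ)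
      = (z.1.2 k : ℕ)
    exact congrArg Fin.val (Fin.snoc_castSucc (α := fun k => Fin (μ k + 1)) ..)
  have hwu : Finsupp.weight wfull x (Fin.last ℓ) = Finsupp.weight u d' := by
    rw [← hx, weight_coord, weight_mapDomain, hfu]
  have hwi : ∀ k : Fin ℓ, Finsupp.weight wfull x k.castSucc = Finsupp.weight wν' d' k := by
    intro k
    rw [← hx, weight_coord, weight_mapDomain, hfi k, ← weight_coord]
  have key : (Finsupp.weight wfull x = γ) ↔
      (Finsupp.weight u d' = γ (Fin.last ℓ) ∧ Finsupp.weight wν' d' = Fin.init γ) := by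
    constructor
    · intro h
      exact ⟨hwu.symm.trans (congrFun h _),
        funext fun k => (hwi k).symm.trans (congrFun h k.castSucc)⟩
    · rintro ⟨h1', h2'⟩
      funext k
      induction k using Fin.lastCases with
      | last => rw [hwu]; exact h1'
      | cast k => rw [hwi k]; exact congrFun h2' k
  split_ifs with c1 c2 c3 c4 c5
  · rfl
  · exact absurd (key.mpr ⟨c1, c2⟩) c3
  · exact absurd (key.mp c4).2 c2
  · rfl
  · exact absurd (key.mp c5).1 c1
  · rfl
end

section
/- For all X ∈ g⊗A and F ∈ g*⊗A*, the element ȷ(X·F) − ι(X)·ȷ(F) of g*⊗F[Γ] lies in g*⊗span_F{q^γ : γ ∈ (Ω₁−Ω₁)\(−Ω₁)}. -/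
open MvPolynomial

/-- The coadjoint action of `x ∈ g` on `g*`: `(x · f)(y) = f ⁅y, x⁆`. -/
noncomputable def coadj {F : Type*} [Field F] {g : Type*} [LieRing g] [LieAlgebra F g]
    (x : g) (φ : Module.Dual F g) : Module.Dual F g :=
  -(φ ∘ₗ (LieAlgebra.ad F g x : g →ₗ[F] g))

/-- For all `X = ∑_{ω ∈ Ω₁} xc ω ⊗ τ^ω ∈ g ⊗ A` and
`F = ∑_{ω ∈ Ω₁} f ω ⊗ ε^ω ∈ g* ⊗ A*`, the element `ȷ(X·F) - ι(X)·ȷ(F)` of `g* ⊗ F[Γ]`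
lies in `g* ⊗ span_F{q^γ : γ ∈ (Ω₁ - Ω₁) \ (-Ω₁)}`.  Here `Γ = ℤ^ℓ`, the group algebra
`F[Γ]` is modeled as `AddMonoidAlgebra F (Fin ℓ → ℤ)` with `q^γ = single γ 1`;
`ι : g ⊗ A → g ⊗ F[Γ]` sends `x ⊗ τ^ω ↦ x ⊗ q^ω` and `ȷ : g* ⊗ A* → g* ⊗ F[Γ]` sends
`f ⊗ ε^ω ↦ f ⊗ q^{-ω}`; elements of `g* ⊗ F[Γ]` are identified (via finite-dimensionality
of `g`) with maps `g → F[Γ]`, and the stated membership means that the value on each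
`y ∈ g` lies in `span_F{q^γ : γ ∈ (Ω₁ - Ω₁) \ (-Ω₁)}`.  The action of `g ⊗ A` on
`g* ⊗ A*` is `(x ⊗ τ^ω)·(f ⊗ ε^λ) = (x·f) ⊗ (τ^ω·ε^λ)` with `(τ^ω·ε^λ)(τ^γ) = ε^λ(τ^{ω+γ})`,
so that the `ε^ν`-component of `X·F` is `∑_{ω ∈ Ω₁, ν + ω ∈ Ω₁} (xc ω)·(f (ν + ω))`;
the action of `g ⊗ F[Γ]` on `g* ⊗ F[Γ]` is `(x ⊗ q^ω)·(f ⊗ q^λ) = (x·f) ⊗ q^{ω+λ}`. -/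
theorem statement3 {F : Type*} [Field F] [CharZero F] {ℓ : ℕ}
    (Ω₁ : Finset (Fin ℓ → ℕ))
    (hstab : ∀ ω γ : Fin ℓ → ℕ, ω ∉ Ω₁ → ω + γ ∉ Ω₁)
    {g : Type*} [LieRing g] [LieAlgebra F g] [FiniteDimensional F g]
    (xc : ↥Ω₁ → g) (f : ↥Ω₁ → Module.Dual F g) (y : g) :
    (∑ ν : ↥Ω₁, AddMonoidAlgebra.single (-(zc (ν : Fin ℓ → ℕ)))
        ((∑ ω : ↥Ω₁, if h : ((ν : Fin ℓ → ℕ) + (ω : Fin ℓ → ℕ) ∈ Ω₁)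
            then coadj (xc ω) (f ⟨(ν : Fin ℓ → ℕ) + (ω : Fin ℓ → ℕ), h⟩)
            else 0) y))
      - (∑ ω : ↥Ω₁, ∑ lam : ↥Ω₁,
          AddMonoidAlgebra.single (zc (ω : Fin ℓ → ℕ) - zc (lam : Fin ℓ → ℕ))
            ((coadj (xc ω) (f lam)) y))
      ∈ Submodule.span F ((fun γ => AddMonoidAlgebra.single γ (1 : F)) ''
          {γ : Fin ℓ → ℤ | (∃ α ∈ Ω₁, ∃ β ∈ Ω₁, γ = zc α - zc β)
            ∧ ¬(∃ β ∈ Ω₁, γ = -(zc β))}) := by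
  classical
  set fhat : (Fin ℓ → ℕ) → Module.Dual F g :=
    fun μ => if h : μ ∈ Ω₁ then f ⟨μ, h⟩ else 0 with hfhat
  set T : ↥Ω₁ → ↥Ω₁ → AddMonoidAlgebra F (Fin ℓ → ℤ) := fun ω lam =>
    AddMonoidAlgebra.single (zc (ω : Fin ℓ → ℕ) - zc (lam : Fin ℓ → ℕ))
      ((coadj (xc ω) (f lam)) y) with hT
  have key : (∑ ν : ↥Ω₁, AddMonoidAlgebra.single (-(zc (ν : Fin ℓ → ℕ)))
        ((∑ ω : ↥Ω₁, if h : ((ν : Fin ℓ → ℕ) + (ω : Fin ℓ → ℕ) ∈ Ω₁)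
            then coadj (xc ω) (f ⟨(ν : Fin ℓ → ℕ) + (ω : Fin ℓ → ℕ), h⟩)
            else 0) y))
      = ∑ ω : ↥Ω₁, ∑ lam : ↥Ω₁,
          if (∃ ν ∈ Ω₁, ν + (ω : Fin ℓ → ℕ) = (lam : Fin ℓ → ℕ)) then T ω lam else 0 := by
    have step1 : ∀ ν : ↥Ω₁, AddMonoidAlgebra.single (-(zc (ν : Fin ℓ → ℕ)))
        ((∑ ω : ↥Ω₁, if h : ((ν : Fin ℓ → ℕ) + (ω : Fin ℓ → ℕ) ∈ Ω₁)
            then coadj (xc ω) (f ⟨(ν : Fin ℓ → ℕ) + (ω : Fin ℓ → ℕ), h⟩)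
            else 0) y)
        = ∑ ω : ↥Ω₁, if ((ν : Fin ℓ → ℕ) + (ω : Fin ℓ → ℕ) ∈ Ω₁)
            then AddMonoidAlgebra.single (-(zc (ν : Fin ℓ → ℕ)))
              ((coadj (xc ω) (fhat ((ν : Fin ℓ → ℕ) + (ω : Fin ℓ → ℕ)))) y)
            else 0 := by
      intro ν
      rw [LinearMap.sum_apply]
      rw [show (AddMonoidAlgebra.single (-(zc (ν : Fin ℓ → ℕ)))
          (∑ ω : ↥Ω₁, (if h : ((ν : Fin ℓ → ℕ) + (ω : Fin ℓ → ℕ) ∈ Ω₁)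
            then coadj (xc ω) (f ⟨(ν : Fin ℓ → ℕ) + (ω : Fin ℓ → ℕ), h⟩)
            else 0) y) : AddMonoidAlgebra F (Fin ℓ → ℤ))
        = ∑ ω : ↥Ω₁, AddMonoidAlgebra.single (-(zc (ν : Fin ℓ → ℕ)))
            ((if h : ((ν : Fin ℓ → ℕ) + (ω : Fin ℓ → ℕ) ∈ Ω₁)
              then coadj (xc ω) (f ⟨(ν : Fin ℓ → ℕ) + (ω : Fin ℓ → ℕ), h⟩)
              else 0) y)
        from map_sum (AddMonoidAlgebra.singleAddHom _) _ _]
      refine Finset.sum_congr rfl fun ω _ => ?_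
      by_cases h : ((ν : Fin ℓ → ℕ) + (ω : Fin ℓ → ℕ) ∈ Ω₁)
      · simp [h, hfhat]
      · simp [h]
    simp only [step1]
    rw [Finset.sum_comm]
    refine Finset.sum_congr rfl fun ω _ => ?_
    rw [← Finset.sum_filter, ← Finset.sum_filter]
    refine Finset.sum_bij' (i := fun ν hν => (⟨(ν : Fin ℓ → ℕ) + (ω : Fin ℓ → ℕ),
        (Finset.mem_filter.mp hν).2⟩ : ↥Ω₁))
      (j := fun lam hlam => (⟨(lam : Fin ℓ → ℕ) - (ω : Fin ℓ → ℕ), by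
        obtain ⟨ν, hν, hνeq⟩ := (Finset.mem_filter.mp hlam).2
        have : (lam : Fin ℓ → ℕ) - (ω : Fin ℓ → ℕ) = ν := by
          funext k
          have := congrFun hνeq k
          simp only [Pi.add_apply, Pi.sub_apply] at this ⊢
          omega
        rw [this]; exact hν⟩ : ↥Ω₁)) ?_ ?_ ?_ ?_ ?_
    · intro ν hν
      refine Finset.mem_filter.mpr ⟨Finset.mem_univ _, ⟨(ν : Fin ℓ → ℕ), ν.2, rfl⟩⟩
    · intro lam hlam
      obtain ⟨ν, hν, hνeq⟩ := (Finset.mem_filter.mp hlam).2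
      have hsub : (lam : Fin ℓ → ℕ) - (ω : Fin ℓ → ℕ) = ν := by
        funext k
        have := congrFun hνeq k
        simp only [Pi.add_apply, Pi.sub_apply] at this ⊢
        omega
      refine Finset.mem_filter.mpr ⟨Finset.mem_univ _, ?_⟩
      show (lam : Fin ℓ → ℕ) - (ω : Fin ℓ → ℕ) + (ω : Fin ℓ → ℕ) ∈ Ω₁
      rw [hsub, hνeq]; exact lam.2
    · intro ν hν
      apply Subtype.ext
      funext k
      simp only [Pi.add_apply, Pi.sub_apply]
      omega
    · intro lam hlam
      obtain ⟨ν, hν, hνeq⟩ := (Finset.mem_filter.mp hlam).2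
      apply Subtype.ext
      funext k
      have := congrFun hνeq k
      simp only [Pi.add_apply, Pi.sub_apply] at this ⊢
      omega
    · intro ν hν
      have h := (Finset.mem_filter.mp hν).2
      have hexp : -(zc (ν : Fin ℓ → ℕ)) =
          zc (ω : Fin ℓ → ℕ) - zc ((ν : Fin ℓ → ℕ) + (ω : Fin ℓ → ℕ)) := by
        funext k
        simp only [zc, Pi.add_apply, Pi.sub_apply, Pi.neg_apply]
        push_cast; ring
      simp only [hT, hfhat, dif_pos h, hexp]
  rw [key]
  rw [← Finset.sum_sub_distrib]
  refine Submodule.sum_mem _ fun ω _ => ?_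
  rw [← Finset.sum_sub_distrib]
  refine Submodule.sum_mem _ fun lam _ => ?_
  by_cases hc : (∃ ν ∈ Ω₁, ν + (ω : Fin ℓ → ℕ) = (lam : Fin ℓ → ℕ))
  · simp [hc, hT]
  · rw [if_neg hc]
    rw [zero_sub]
    refine neg_mem ?_
    have hmem : (zc (ω : Fin ℓ → ℕ) - zc (lam : Fin ℓ → ℕ)) ∈
        {γ : Fin ℓ → ℤ | (∃ α ∈ Ω₁, ∃ β ∈ Ω₁, γ = zc α - zc β)
          ∧ ¬(∃ β ∈ Ω₁, γ = -(zc β))} := by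
      constructor
      · exact ⟨_, ω.2, _, lam.2, rfl⟩
      · rintro ⟨β, hβ, hβeq⟩
        apply hc
        refine ⟨β, hβ, ?_⟩
        funext k
        have := congrFun hβeq k
        simp only [zc, Pi.sub_apply, Pi.neg_apply, Pi.add_apply] at this ⊢
        omega
    have hsp := Submodule.smul_mem _ ((coadj (xc ω) (f lam)) y)
      (Submodule.subset_span (Set.mem_image_of_mem _ hmem) :
        (AddMonoidAlgebra.single (zc (ω : Fin ℓ → ℕ) - zc (lam : Fin ℓ → ℕ)) (1 : F)) ∈
          Submodule.span F ((fun γ => AddMonoidAlgebra.single γ (1 : F)) ''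
            {γ : Fin ℓ → ℤ | (∃ α ∈ Ω₁, ∃ β ∈ Ω₁, γ = zc α - zc β)
              ∧ ¬(∃ β ∈ Ω₁, γ = -(zc β))}))
    simpa [hT, Finsupp.smul_single] using hsp
end

section
/- Suppose p ∈ S^k(g) for some k ≥ 1. Then for all F ∈ g*⊗span_F{q^γ : γ ∈ −Ω₁} and G ∈ g*⊗span_F{q^γ : γ ∈ (Ω₁−Ω₁)\(−Ω₁)}, the difference p(F+G) − p(F) lies in span_F{q^γ : γ ∈ Φ_k} ⊆ F[Γ]. -/
open MvPolynomial

/-- The sum of two subsets of an additive monoid. -/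
def setAdd {M : Type*} [Add M] (S T : Set M) : Set M := {x | ∃ a ∈ S, ∃ b ∈ T, x = a + b}

/-- The `j`-fold sumset `S^j` of a subset `S` of an additive monoid (with `S^0 = {0}`). -/
def nfoldSum {M : Type*} [AddMonoid M] (S : Set M) : ℕ → Set M
  | 0 => {0}
  | n + 1 => setAdd S (nfoldSum S n)

section Aux
variable {F : Type*} [Field F] {M : Type*} [AddCommMonoid M]

noncomputable def sp (F : Type*) [Field F] {M : Type*} [AddCommMonoid M] (A : Set M) :
    Submodule F (AddMonoidAlgebra F M) :=
  Submodule.span F ((fun γ => AddMonoidAlgebra.single γ (1 : F)) '' A)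

lemma sp_mono {A B : Set M} (h : A ⊆ B) : sp F A ≤ sp F B :=
  Submodule.span_mono (Set.image_mono h)

lemma mul_mem_sp {A B : Set M} {x y : AddMonoidAlgebra F M}
    (hx : x ∈ sp F A) (hy : y ∈ sp F B) : x * y ∈ sp F (setAdd A B) := by
  have h := Submodule.mul_mem_mul hx hy
  simp only [sp] at h
  rw [Submodule.span_mul_span] at h
  refine Submodule.span_le.2 ?_ h
  rintro z hz
  rw [Set.mem_mul] at hz
  obtain ⟨a, ⟨γ, hγ, rfl⟩, b, ⟨δ, hδ, rfl⟩, rfl⟩ := hz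
  rw [AddMonoidAlgebra.single_mul_single, mul_one]
  exact Submodule.subset_span ⟨γ + δ, ⟨γ, hγ, δ, hδ, rfl⟩, rfl⟩

lemma setAdd_comm (A B : Set M) : setAdd A B = setAdd B A := by
  ext x
  constructor <;> rintro ⟨a, ha, b, hb, rfl⟩ <;> exact ⟨b, hb, a, ha, add_comm a b⟩

lemma setAdd_assoc (A B C : Set M) : setAdd (setAdd A B) C = setAdd A (setAdd B C) := by
  ext x
  constructor
  · rintro ⟨_, ⟨a, ha, b, hb, rfl⟩, c, hc, rfl⟩
    exact ⟨a, ha, b + c, ⟨b, hb, c, hc, rfl⟩, (add_assoc a b c)⟩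
  · rintro ⟨a, ha, _, ⟨b, hb, c, hc, rfl⟩, rfl⟩
    exact ⟨a + b, ⟨a, ha, b, hb, rfl⟩, c, hc, (add_assoc a b c).symm⟩

lemma setAdd_iUnion {ι : Type*} (A : Set M) (s : Finset ι) (C : ι → Set M) :
    setAdd A (⋃ j ∈ s, C j) = ⋃ j ∈ s, setAdd A (C j) := by
  ext x
  simp only [Set.mem_iUnion, setAdd, Set.mem_setOf_eq]
  constructor
  · rintro ⟨a, ha, b, ⟨j, hj, hb⟩, rfl⟩; exact ⟨j, hj, a, ha, b, hb, rfl⟩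
  · rintro ⟨j, hj, a, ha, b, hb, rfl⟩; exact ⟨a, ha, b, ⟨j, hj, hb⟩, rfl⟩

lemma one_mem_sp_zero : (1 : AddMonoidAlgebra F M) ∈ sp F {(0 : M)} :=
  Submodule.subset_span ⟨0, rfl, AddMonoidAlgebra.one_def.symm⟩

lemma key1 (A B : Set M) (n j : ℕ) (hj : j ≤ n) :
    setAdd A (setAdd (nfoldSum B j) (nfoldSum A (n - j)))
      ⊆ setAdd (nfoldSum B j) (nfoldSum A (n + 1 - j)) := by
  have h : n + 1 - j = (n - j) + 1 := by omega
  rw [h, show nfoldSum A ((n - j) + 1) = setAdd A (nfoldSum A (n - j)) from rfl,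
    ← setAdd_assoc, setAdd_comm A (nfoldSum B j), setAdd_assoc]

lemma key2 (A B : Set M) (n j : ℕ) :
    setAdd B (setAdd (nfoldSum B j) (nfoldSum A (n - j)))
      ⊆ setAdd (nfoldSum B (j + 1)) (nfoldSum A (n + 1 - (j + 1))) := by
  rw [show n + 1 - (j + 1) = n - j from by omega, ← setAdd_assoc]
  exact subset_of_eq rfl

lemma prod_sum_mem (A B : Set M) (m : Multiset (AddMonoidAlgebra F M × AddMonoidAlgebra F M))
    (h : ∀ q ∈ m, q.1 ∈ sp F A ∧ q.2 ∈ sp F B) :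
    (m.map fun q => q.1 + q.2).prod ∈
      sp F (⋃ j ∈ Finset.range (Multiset.card m + 1),
        setAdd (nfoldSum B j) (nfoldSum A (Multiset.card m - j))) := by
  induction m using Multiset.induction with
  | empty =>
    simp only [Multiset.map_zero, Multiset.prod_zero, Multiset.card_zero]
    refine sp_mono ?_ (one_mem_sp_zero (F := F))
    intro x hx
    rw [hx]
    exact Set.mem_iUnion₂.2 ⟨0, Finset.mem_range.2 (by omega),
      ⟨0, rfl, 0, rfl, (add_zero 0).symm⟩⟩
  | cons q s ih =>
    have hq := h q (Multiset.mem_cons_self q s)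
    have ihs := ih (fun r hr => h r (Multiset.mem_cons_of_mem hr))
    rw [Multiset.map_cons, Multiset.prod_cons, add_mul]
    set n := Multiset.card s with hn
    have hcard : Multiset.card (q ::ₘ s) = n + 1 := by simp [hn]
    rw [hcard]
    refine Submodule.add_mem _ ?_ ?_
    · have h1 := mul_mem_sp hq.1 ihs
      rw [setAdd_iUnion] at h1
      refine sp_mono ?_ h1
      refine Set.iUnion₂_subset fun j hj => ?_
      rw [Finset.mem_range] at hj
      intro z hz
      exact Set.mem_iUnion₂.2 ⟨j, Finset.mem_range.2 (by omega), key1 A B n j (by omega) hz⟩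
    · have h2 := mul_mem_sp hq.2 ihs
      rw [setAdd_iUnion] at h2
      refine sp_mono ?_ h2
      refine Set.iUnion₂_subset fun j hj => ?_
      rw [Finset.mem_range] at hj
      intro z hz
      exact Set.mem_iUnion₂.2 ⟨j + 1, Finset.mem_range.2 (by omega), key2 A B n j hz⟩

lemma prod_diff_mem (A B : Set M) (m : Multiset (AddMonoidAlgebra F M × AddMonoidAlgebra F M))
    (h : ∀ q ∈ m, q.1 ∈ sp F A ∧ q.2 ∈ sp F B) :
    (m.map fun q => q.1 + q.2).prod - (m.map Prod.fst).prod ∈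
      sp F (⋃ j ∈ Finset.Icc 1 (Multiset.card m),
        setAdd (nfoldSum B j) (nfoldSum A (Multiset.card m - j))) := by
  induction m using Multiset.induction with
  | empty => simp
  | cons q s ih =>
    have hq := h q (Multiset.mem_cons_self q s)
    have ihs := ih (fun r hr => h r (Multiset.mem_cons_of_mem hr))
    have hps := prod_sum_mem A B s (fun r hr => h r (Multiset.mem_cons_of_mem hr))
    set n := Multiset.card s with hn
    have hcard : Multiset.card (q ::ₘ s) = n + 1 := by simp [hn]
    rw [hcard]
    simp only [Multiset.map_cons, Multiset.prod_cons]
    have hring : (q.1 + q.2) * (s.map fun q => q.1 + q.2).prod - q.1 * (s.map Prod.fst).prod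
        = q.1 * ((s.map fun q => q.1 + q.2).prod - (s.map Prod.fst).prod)
          + q.2 * (s.map fun q => q.1 + q.2).prod := by ring
    rw [hring]
    refine Submodule.add_mem _ ?_ ?_
    · have h1 := mul_mem_sp hq.1 ihs
      rw [setAdd_iUnion] at h1
      refine sp_mono ?_ h1
      refine Set.iUnion₂_subset fun j hj => ?_
      rw [Finset.mem_Icc] at hj
      intro z hz
      exact Set.mem_iUnion₂.2 ⟨j, Finset.mem_Icc.2 ⟨hj.1, by omega⟩, key1 A B n j hj.2 hz⟩
    · have h2 := mul_mem_sp hq.2 hps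
      rw [setAdd_iUnion] at h2
      refine sp_mono ?_ h2
      refine Set.iUnion₂_subset fun j hj => ?_
      rw [Finset.mem_range] at hj
      intro z hz
      exact Set.mem_iUnion₂.2 ⟨j + 1, Finset.mem_Icc.2 ⟨by omega, by omega⟩, key2 A B n j hz⟩

lemma toMultiset_map_prod {ι R : Type*} [CommMonoid R] (d : ι →₀ ℕ) (x : ι → R) :
    (d.toMultiset.map x).prod = d.prod fun i n => x i ^ n := by
  rw [Finsupp.toMultiset_map, Finsupp.prod_toMultiset,
    Finsupp.prod_mapDomain_index (fun _ => pow_zero _) (fun _ _ _ => pow_add _ _ _)]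

end Aux

/-- Suppose `p ∈ S^k(g)` for some `k ≥ 1` (with `S(g)` modeled as
`MvPolynomial ι F` via a basis `bg` of `g`).  Then for all
`F ∈ g* ⊗ span_F{q^γ : γ ∈ -Ω₁}` and `G ∈ g* ⊗ span_F{q^γ : γ ∈ (Ω₁ - Ω₁) \ (-Ω₁)}`
(modeled, via finite-dimensionality of `g`, as linear maps `g → F[Γ]` all of whose values
lie in the respective spans, where `F[Γ] = F[ℤ^ℓ]` is modeled as
`AddMonoidAlgebra F (Fin ℓ → ℤ)` with `q^γ = single γ 1`), the difference
`p(F + G) - p(F)` lies in `span_F{q^γ : γ ∈ Φ_k}`, where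
`Φ_k = ⋃_{j=1}^{k} (((Ω₁ - Ω₁) \ (-Ω₁))^j + (-Ω₁)^{k-j})`.
Evaluation of `p` at an element of `g* ⊗ F[Γ]` is via the induced algebra homomorphism
`S(g) → F[Γ]` determined by `x ↦ ∑ᵢ fᵢ(x) bᵢ`. -/
theorem statement4 {F : Type*} [Field F] [CharZero F] {ℓ : ℕ}
    (Ω₁ : Finset (Fin ℓ → ℕ))
    (hstab : ∀ ω γ : Fin ℓ → ℕ, ω ∉ Ω₁ → ω + γ ∉ Ω₁)
    {g : Type*} [LieRing g] [LieAlgebra F g] [FiniteDimensional F g]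
    {ι : Type*} [Fintype ι] (bg : Module.Basis ι F g)
    (k : ℕ) (hk : 1 ≤ k) (p : MvPolynomial ι F) (hp : p.IsHomogeneous k)
    (Fm Gm : g →ₗ[F] AddMonoidAlgebra F (Fin ℓ → ℤ))
    (hF : ∀ y : g, Fm y ∈ Submodule.span F
      ((fun γ => AddMonoidAlgebra.single γ (1 : F)) ''
        {γ : Fin ℓ → ℤ | ∃ β ∈ Ω₁, γ = -(zc β)}))
    (hG : ∀ y : g, Gm y ∈ Submodule.span F
      ((fun γ => AddMonoidAlgebra.single γ (1 : F)) ''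
        {γ : Fin ℓ → ℤ | (∃ α ∈ Ω₁, ∃ β ∈ Ω₁, γ = zc α - zc β)
          ∧ ¬(∃ β ∈ Ω₁, γ = -(zc β))})) :
    aeval (fun i => Fm (bg i) + Gm (bg i)) p - aeval (fun i => Fm (bg i)) p
      ∈ Submodule.span F ((fun γ => AddMonoidAlgebra.single γ (1 : F)) ''
          (⋃ j ∈ Finset.Icc 1 k, setAdd
            (nfoldSum {γ : Fin ℓ → ℤ | (∃ α ∈ Ω₁, ∃ β ∈ Ω₁, γ = zc α - zc β)
                ∧ ¬(∃ β ∈ Ω₁, γ = -(zc β))} j)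
            (nfoldSum {γ : Fin ℓ → ℤ | ∃ β ∈ Ω₁, γ = -(zc β)} (k - j)))) := by
  classical
  set A : Set (Fin ℓ → ℤ) := {γ | ∃ β ∈ Ω₁, γ = -(zc β)} with hA
  set B : Set (Fin ℓ → ℤ) := {γ : Fin ℓ → ℤ | (∃ α ∈ Ω₁, ∃ β ∈ Ω₁, γ = zc α - zc β)
      ∧ ¬(∃ β ∈ Ω₁, γ = -(zc β))} with hB
  show _ ∈ sp F (⋃ j ∈ Finset.Icc 1 k, setAdd (nfoldSum B j) (nfoldSum A (k - j)))
  have hrw : ∀ x : ι → AddMonoidAlgebra F (Fin ℓ → ℤ), aeval x p =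
      ∑ d ∈ p.support, algebraMap F _ (coeff d p) * d.prod fun i n => x i ^ n := by
    intro x
    conv_lhs => rw [← p.support_sum_monomial_coeff]
    rw [map_sum]
    simp only [aeval_monomial]
  rw [hrw, hrw, ← Finset.sum_sub_distrib]
  refine Submodule.sum_mem _ fun d hd => ?_
  rw [← mul_sub, ← Algebra.smul_def]
  refine Submodule.smul_mem _ _ ?_
  set m : Multiset (AddMonoidAlgebra F (Fin ℓ → ℤ) × AddMonoidAlgebra F (Fin ℓ → ℤ)) :=
    d.toMultiset.map fun i => (Fm (bg i), Gm (bg i)) with hm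
  have hcard : Multiset.card m = k := by
    rw [hm, Multiset.card_map, Finsupp.card_toMultiset]
    have := hp (MvPolynomial.mem_support_iff.mp hd)
    rw [← this, Finsupp.weight_apply]
    simp [Finsupp.sum, mul_comm]
  have hmem : ∀ q ∈ m, q.1 ∈ sp F A ∧ q.2 ∈ sp F B := by
    intro q hq
    rw [hm, Multiset.mem_map] at hq
    obtain ⟨i, _, rfl⟩ := hq
    exact ⟨hF (bg i), hG (bg i)⟩
  have key := prod_diff_mem A B m hmem
  rw [hcard] at key
  have e1 : (m.map fun q => q.1 + q.2).prod = d.prod fun i n => (Fm (bg i) + Gm (bg i)) ^ n := by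
    rw [hm, Multiset.map_map]
    exact toMultiset_map_prod d _
  have e2 : (m.map Prod.fst).prod = d.prod fun i n => (Fm (bg i)) ^ n := by
    rw [hm, Multiset.map_map]
    exact toMultiset_map_prod d _
  rwa [e1, e2] at key
end

section
/- Suppose p ∈ S^k(g)^g for some k ≥ 1, i.e. p is a degree-k element of S(g) invariant under the adjoint action of g. Then p_γ ∈ S^k(g⊗A)^{g⊗A} for every γ ∉ −Φ_k = ⋃_{j=1}^{k} ( ((Ω₁−Ω₁)\Ω₁)^j + Ω₁^{k−j} ); that is, every such component p_γ is invariant under the adjoint action of g⊗A on S(g⊗A). -/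
open MvPolynomial

/-- The adjoint action of `x ∈ g` on `S(g) = MvPolynomial ι F` (variables indexed by the
basis `bg` of `g`), described by its values on variables: `x · bg j = ⁅x, bg j⁆`,
expanded in the basis. -/
noncomputable def vAd {F : Type*} [Field F] {g : Type*} [LieRing g] [LieAlgebra F g]
    {ι : Type*} [Fintype ι] (bg : Module.Basis ι F g) (x : g) : ι → MvPolynomial ι F :=
  fun j => ∑ m, (bg.repr ⁅x, bg j⁆ m) • X m

/-- The adjoint action of `X = ∑_{ω ∈ Ω₁} xc ω ⊗ τ^ω ∈ g ⊗ A` on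
`S(g ⊗ A) = MvPolynomial (ι × Ω₁) F` (the variable `X (j, λ)` corresponding to
`bg j ⊗ τ^λ`), described by its values on variables:
`X · (bg j ⊗ τ^λ) = ∑_ω ⁅xc ω, bg j⁆ ⊗ τ^{ω+λ}`, where `τ^{ω+λ} = 0` if `ω + λ ∉ Ω₁`. -/
noncomputable def vAdA {F : Type*} [Field F] {ℓ : ℕ} (Ω₁ : Finset (Fin ℓ → ℕ))
    {g : Type*} [LieRing g] [LieAlgebra F g] {ι : Type*} [Fintype ι] (bg : Module.Basis ι F g)
    (xc : ↥Ω₁ → g) : ι × ↥Ω₁ → MvPolynomial (ι × ↥Ω₁) F :=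
  fun z => ∑ ω : ↥Ω₁,
    if h : ((ω : Fin ℓ → ℕ) + (z.2 : Fin ℓ → ℕ) ∈ Ω₁)
    then ∑ m, (bg.repr ⁅xc ω, bg z.1⁆ m) •
      X (m, (⟨(ω : Fin ℓ → ℕ) + (z.2 : Fin ℓ → ℕ), h⟩ : ↥Ω₁))
    else 0

open Pointwise

section ExtDerBasic

variable {R : Type*} [CommSemiring R] {σ : Type*} [Fintype σ]

lemma extDer_add (v : σ → MvPolynomial σ R) (p q : MvPolynomial σ R) :
    extDer v (p + q) = extDer v p + extDer v q := by
  simp [extDer, map_add, mul_add, Finset.sum_add_distrib]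

lemma extDer_zero (v : σ → MvPolynomial σ R) : extDer v 0 = 0 := by
  simp [extDer]

lemma extDer_sum {α : Type*} (v : σ → MvPolynomial σ R) (s : Finset α)
    (g : α → MvPolynomial σ R) :
    extDer v (∑ a ∈ s, g a) = ∑ a ∈ s, extDer v (g a) := by
  simp [extDer, map_sum, Finset.mul_sum]
  rw [Finset.sum_comm]

lemma extDer_X (v : σ → MvPolynomial σ R) (z : σ) : extDer v (X z) = v z := by
  classical
  simp [extDer, pderiv_X, Pi.single_apply, mul_ite]

lemma extDer_mul (v : σ → MvPolynomial σ R) (a b : MvPolynomial σ R) :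
    extDer v (a * b) = extDer v a * b + a * extDer v b := by
  simp only [extDer, pderiv_mul, mul_add, Finset.sum_add_distrib, Finset.sum_mul,
    Finset.mul_sum]
  congr 1 <;> (apply Finset.sum_congr rfl; intros; ring)

lemma extDer_aeval {ι : Type*} [Fintype ι] [DecidableEq ι]
    (f : ι → MvPolynomial σ R) (v : σ → MvPolynomial σ R) (q : MvPolynomial ι R) :
    extDer v (aeval f q) = ∑ j, aeval f (pderiv j q) * extDer v (f j) := by
  induction q using MvPolynomial.induction_on with
  | C c => simp [extDer, aeval_C, algebraMap_eq]
  | add p q hp hq =>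
      rw [map_add, extDer_add, hp, hq, ← Finset.sum_add_distrib]
      apply Finset.sum_congr rfl; intros; rw [map_add, map_add, add_mul]
  | mul_X p j hp =>
      rw [map_mul, aeval_X, extDer_mul, hp]
      have hd : ∀ i : ι, pderiv i (p * X j) = pderiv i p * X j + if i = j then p else 0 := by
        intro i
        rw [pderiv_mul, pderiv_X, Pi.single_apply]
        by_cases h : i = j
        · subst h; simp
        · rw [if_neg (fun hh => h hh.symm), if_neg h, mul_zero, add_zero]
      simp only [hd, map_add, map_mul, aeval_X, add_mul, Finset.sum_add_distrib,
        apply_ite (aeval f), map_zero, ite_mul, zero_mul]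
      rw [Finset.sum_ite_eq' Finset.univ j fun i => (aeval f) p * extDer v (f i)]
      simp only [Finset.mem_univ, if_pos]
      rw [Finset.sum_mul]
      congr 1
      apply Finset.sum_congr rfl; intros; ring

end ExtDerBasic

section Weights

lemma weight_single_one {σ M : Type*} [AddCommMonoid M] (w : σ → M) (z : σ) :
    Finsupp.weight w (Finsupp.single z 1) = w z := by
  simp [Finsupp.weight_apply, Finsupp.sum_single_index]

lemma weight_mem_nfoldSum {σ M : Type*} [AddCommMonoid M] (w : σ → M) (S : Set M)
    (hw : ∀ z, w z ∈ S) : ∀ (n : ℕ) (d : σ →₀ ℕ), Finsupp.weight (1 : σ → ℕ) d = n →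
    Finsupp.weight w d ∈ nfoldSum S n := by
  intro n
  induction n with
  | zero =>
    intro d hd
    have hd0 : d = 0 := by
      ext z
      by_contra hz
      have hzs : z ∈ d.support := Finsupp.mem_support_iff.mpr hz
      have : ∀ i ∈ d.support, d i = 0 := by
        apply (Finset.sum_eq_zero_iff).mp
        simpa [Finsupp.weight_apply, Finsupp.sum] using hd
      exact hz (this z hzs)
    subst hd0
    simp only [map_zero]
    exact Set.mem_singleton _
  | succ n ih =>
    intro d hd
    have hne : d ≠ 0 := by
      rintro rfl
      simp at hd
    obtain ⟨z, hz⟩ : ∃ z, d z ≠ 0 := by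
      by_contra h
      push_neg at h
      exact hne (Finsupp.ext h)
    have hdd : d = Finsupp.single z 1 + (d - Finsupp.single z 1) := by
      ext i
      rw [Finsupp.add_apply, Finsupp.tsub_apply]
      rcases eq_or_ne z i with h | h
      · subst h; rw [Finsupp.single_eq_same]; omega
      · rw [Finsupp.single_eq_of_ne' h]; omega
    have h1 : Finsupp.weight (1 : σ → ℕ) (d - Finsupp.single z 1) = n := by
      have := hd
      rw [hdd, map_add, weight_single_one] at this
      simp only [Pi.one_apply] at this
      omega
    have hmem := ih (d - Finsupp.single z 1) h1
    show Finsupp.weight w d ∈ setAdd S (nfoldSum S n)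
    refine ⟨w z, hw z, Finsupp.weight w (d - Finsupp.single z 1), hmem, ?_⟩
    rw [hdd, map_add, weight_single_one]
    rw [← hdd]

end Weights

section HomogLemmas

variable {σ : Type*} {F : Type*} [CommRing F]

lemma pderiv_isWeightedHomogeneous {M : Type*} [AddCommGroup M]
    {w : σ → M} {φ : MvPolynomial σ F} {δ : M}
    (hφ : φ.IsWeightedHomogeneous w δ) (z : σ) :
    (pderiv z φ).IsWeightedHomogeneous w (δ - w z) := by
  classical
  have hrepr : pderiv z φ = ∑ d ∈ φ.support, pderiv z (monomial d (coeff d φ)) := by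
    conv_lhs => rw [φ.as_sum]
    rw [map_sum]
  rw [← mem_weightedHomogeneousSubmodule, hrepr]
  apply Submodule.sum_mem
  intro d hdsup
  rw [pderiv_monomial]
  by_cases hz : d z = 0
  · simp [hz, Submodule.zero_mem]
  · rw [mem_weightedHomogeneousSubmodule]
    apply isWeightedHomogeneous_monomial
    have hdd : d = (d - Finsupp.single z 1) + Finsupp.single z 1 := by
      ext i
      rw [Finsupp.add_apply, Finsupp.tsub_apply]
      rcases eq_or_ne z i with h | h
      · subst h; rw [Finsupp.single_eq_same]; omega
      · rw [Finsupp.single_eq_of_ne' h]; omega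
    have hwd : Finsupp.weight w d = δ := hφ (mem_support_iff.mp hdsup)
    rw [hdd, map_add, weight_single_one] at hwd
    exact eq_sub_of_add_eq hwd

lemma pderiv_isHomogeneous {φ : MvPolynomial σ F} {n : ℕ}
    (hφ : φ.IsHomogeneous n) (z : σ) :
    (pderiv z φ).IsHomogeneous (n - 1) := by
  classical
  have hrepr : pderiv z φ = ∑ d ∈ φ.support, pderiv z (monomial d (coeff d φ)) := by
    conv_lhs => rw [φ.as_sum]
    rw [map_sum]
  rw [IsHomogeneous, ← mem_weightedHomogeneousSubmodule, hrepr]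
  apply Submodule.sum_mem
  intro d hdsup
  rw [pderiv_monomial]
  by_cases hz : d z = 0
  · simp [hz, Submodule.zero_mem]
  · rw [mem_weightedHomogeneousSubmodule]
    apply isWeightedHomogeneous_monomial
    have hdd : d = (d - Finsupp.single z 1) + Finsupp.single z 1 := by
      ext i
      rw [Finsupp.add_apply, Finsupp.tsub_apply]
      rcases eq_or_ne z i with h | h
      · subst h; rw [Finsupp.single_eq_same]; omega
      · rw [Finsupp.single_eq_of_ne' h]; omega
    have hwd : Finsupp.weight (1 : σ → ℕ) d = n := hφ (mem_support_iff.mp hdsup)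
    rw [hdd, map_add, weight_single_one] at hwd
    simp only [Pi.one_apply] at hwd
    omega

lemma extDer_isWeightedHomogeneous [Fintype σ] {M : Type*} [AddCommGroup M]
    {w : σ → M} {v : σ → MvPolynomial σ F} {c : M}
    (hv : ∀ z, (v z).IsWeightedHomogeneous w (w z + c))
    {φ : MvPolynomial σ F} {δ : M} (hφ : φ.IsWeightedHomogeneous w δ) :
    (extDer v φ).IsWeightedHomogeneous w (δ + c) := by
  rw [← mem_weightedHomogeneousSubmodule, extDer]
  apply Submodule.sum_mem
  intro z _
  have h := (hv z).mul (pderiv_isWeightedHomogeneous hφ z)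
  have he : w z + c + (δ - w z) = δ + c := by abel
  rwa [he] at h

lemma extDer_weightedHomogeneousComponent [Fintype σ] {M : Type*} [AddCommGroup M]
    [DecidableEq M] {w : σ → M} {v : σ → MvPolynomial σ F} {c : M}
    (hv : ∀ z, (v z).IsWeightedHomogeneous w (w z + c))
    (δ : M) (φ : MvPolynomial σ F) :
    extDer v (weightedHomogeneousComponent w δ φ)
      = weightedHomogeneousComponent w (δ + c) (extDer v φ) := by
  induction φ using MvPolynomial.induction_on' with
  | add p q hp hq => rw [map_add, extDer_add, extDer_add, map_add, hp, hq]
  | monomial u a =>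
    have hm : (monomial u a : MvPolynomial σ F).IsWeightedHomogeneous w
        (Finsupp.weight w u) := isWeightedHomogeneous_monomial _ _ _ rfl
    by_cases hδ : δ = Finsupp.weight w u
    · subst hδ
      rw [hm.weightedHomogeneousComponent_same,
        (extDer_isWeightedHomogeneous hv hm).weightedHomogeneousComponent_same]
    · rw [hm.weightedHomogeneousComponent_ne δ hδ,
        (extDer_isWeightedHomogeneous hv hm).weightedHomogeneousComponent_ne (δ + c)
          (fun h => hδ (by exact add_right_cancel h)), extDer_zero]

end HomogLemmas

/-- Suppose `p ∈ S^k(g)^g` for some `k ≥ 1`, i.e. `p` is a degree-`k`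
element of `S(g)` invariant under the adjoint action of `g`.  Then
`p_γ ∈ S^k(g ⊗ A)^{g ⊗ A}` for every
`γ ∉ -Φ_k = ⋃_{j=1}^{k} (((Ω₁ - Ω₁) \ Ω₁)^j + Ω₁^{k-j})`; that is, every such component
`p_γ` is homogeneous of degree `k` and invariant under the adjoint action of `g ⊗ A` on
`S(g ⊗ A)` (equivalently, killed by the derivation extending the adjoint action of every
element `∑_{ω ∈ Ω₁} xc ω ⊗ τ^ω` of `g ⊗ A`). -/
theorem statement5 {F : Type*} [Field F] [CharZero F] {ℓ : ℕ}
    (Ω₁ : Finset (Fin ℓ → ℕ))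
    (hstab : ∀ ω γ : Fin ℓ → ℕ, ω ∉ Ω₁ → ω + γ ∉ Ω₁)
    {g : Type*} [LieRing g] [LieAlgebra F g] [FiniteDimensional F g]
    {ι : Type*} [Fintype ι] (bg : Module.Basis ι F g)
    (k : ℕ) (hk : 1 ≤ k) (p : MvPolynomial ι F) (hp : p.IsHomogeneous k)
    (hinv : ∀ x : g, extDer (vAd bg x) p = 0)
    (γ : Fin ℓ → ℤ)
    (hγ : γ ∉ ⋃ j ∈ Finset.Icc 1 k, setAdd
      (nfoldSum {δ : Fin ℓ → ℤ | (∃ α ∈ Ω₁, ∃ β ∈ Ω₁, δ = zc α - zc β)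
          ∧ ¬(∃ β ∈ Ω₁, δ = zc β)} j)
      (nfoldSum {δ : Fin ℓ → ℤ | ∃ β ∈ Ω₁, δ = zc β} (k - j))) :
    (pComp F Ω₁ p γ).IsHomogeneous k
      ∧ ∀ xc : ↥Ω₁ → g, extDer (vAdA Ω₁ bg xc) (pComp F Ω₁ p γ) = 0 := by
  classical
  set w : ι × ↥Ω₁ → (Fin ℓ → ℤ) := fun z => zc (z.2 : Fin ℓ → ℕ) with hwdef
  set f : ι → MvPolynomial (ι × ↥Ω₁) F := fun i => ∑ ω : ↥Ω₁, X (i, ω) with hfdef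
  set Sg : Set (Fin ℓ → ℤ) := {δ : Fin ℓ → ℤ | ∃ β ∈ Ω₁, δ = zc β} with hSgdef
  set Sb : Set (Fin ℓ → ℤ) := {δ : Fin ℓ → ℤ | (∃ α ∈ Ω₁, ∃ β ∈ Ω₁, δ = zc α - zc β)
      ∧ ¬(∃ β ∈ Ω₁, δ = zc β)} with hSbdef
  have htau : ∀ q : MvPolynomial ι F, tauA F Ω₁ ι q = aeval f q := by
    intro q
    simp only [tauA, hfdef]
  have hf1 : ∀ i, (f i).IsHomogeneous 1 := by
    intro i
    rw [hfdef]
    rw [IsHomogeneous, ← mem_weightedHomogeneousSubmodule]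
    exact Submodule.sum_mem _ fun ω _ => isWeightedHomogeneous_X F _ _
  have htauhom : ∀ (n : ℕ) (q : MvPolynomial ι F), q.IsHomogeneous n →
      (aeval f q).IsHomogeneous n := by
    intro n q hq
    simpa using hq.aeval f hf1
  have hpc : pComp F Ω₁ p γ = weightedHomogeneousComponent w γ (tauA F Ω₁ ι p) := rfl
  have hpart1 : (pComp F Ω₁ p γ).IsHomogeneous k := by
    intro d hd
    have hc : coeff d (tauA F Ω₁ ι p) ≠ 0 := by
      intro h0
      rw [hpc, coeff_weightedHomogeneousComponent] at hd
      rw [h0] at hd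
      simp at hd
    rw [htau] at hc
    exact htauhom k p hp hc
  refine ⟨hpart1, ?_⟩
  intro xc
  set V : ↥Ω₁ → (ι × ↥Ω₁) → MvPolynomial (ι × ↥Ω₁) F := fun ω z =>
    if h : ((ω : Fin ℓ → ℕ) + (z.2 : Fin ℓ → ℕ) ∈ Ω₁)
    then ∑ m, (bg.repr ⁅xc ω, bg z.1⁆ m) •
      X (m, (⟨(ω : Fin ℓ → ℕ) + (z.2 : Fin ℓ → ℕ), h⟩ : ↥Ω₁))
    else 0 with hVdef
  have hsplit : extDer (vAdA Ω₁ bg xc) (pComp F Ω₁ p γ)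
      = ∑ ω : ↥Ω₁, extDer (V ω) (pComp F Ω₁ p γ) := by
    simp only [extDer, vAdA, hVdef, Finset.sum_mul]
    rw [Finset.sum_comm]
  rw [hsplit]
  apply Finset.sum_eq_zero
  intro ω _
  -- weighted homogeneity of V ω
  have hvhom : ∀ z, (V ω z).IsWeightedHomogeneous w (w z + zc (ω : Fin ℓ → ℕ)) := by
    intro z
    rw [hVdef]
    dsimp only
    split_ifs with h
    · rw [← mem_weightedHomogeneousSubmodule]
      apply Submodule.sum_mem
      intro m _
      apply Submodule.smul_mem
      rw [mem_weightedHomogeneousSubmodule]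
      have hw1 : w (m, (⟨(ω : Fin ℓ → ℕ) + (z.2 : Fin ℓ → ℕ), h⟩ : ↥Ω₁))
          = w z + zc (ω : Fin ℓ → ℕ) := by
        funext i
        simp only [hwdef, zc, Pi.add_apply]
        push_cast
        ring
      rw [← hw1]
      exact isWeightedHomogeneous_X F _ _
    · intro d hd
      exact absurd (coeff_zero d) hd
  rw [hpc, htau, extDer_weightedHomogeneousComponent hvhom γ (aeval f p)]
  -- chain rule
  have hchain : extDer (V ω) (aeval f p)
      = ∑ j, aeval f (pderiv j p) * (∑ lam : ↥Ω₁, V ω (j, lam)) := by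
    rw [extDer_aeval f (V ω) p]
    apply Finset.sum_congr rfl
    intro j _
    congr 1
    rw [show f j = ∑ lam : ↥Ω₁, X (j, lam) from by rw [hfdef]]
    rw [extDer_sum]
    apply Finset.sum_congr rfl
    intro lam _
    exact extDer_X _ _
  -- invariance transported
  have hinv2 : (0 : MvPolynomial (ι × ↥Ω₁) F)
      = ∑ j, aeval f (pderiv j p) * (∑ m, (bg.repr ⁅xc ω, bg j⁆ m) • f m) := by
    have h0 := congrArg (aeval f) (hinv (xc ω))
    rw [map_zero] at h0
    rw [← h0]
    simp only [extDer]
    rw [map_sum]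
    apply Finset.sum_congr rfl
    intro j _
    rw [map_mul, mul_comm]
    congr 1
    rw [show vAd bg (xc ω) j = ∑ m, (bg.repr ⁅xc ω, bg j⁆ m) • X m from rfl]
    rw [map_sum]
    apply Finset.sum_congr rfl
    intro m _
    rw [map_smul, aeval_X]
  -- the bad index set
  set Sbad : Finset ↥Ω₁ := Finset.univ.filter
      (fun μ : ↥Ω₁ => ¬ ∃ lam : ↥Ω₁,
        (ω : Fin ℓ → ℕ) + (lam : Fin ℓ → ℕ) = (μ : Fin ℓ → ℕ)) with hSbaddef
  have hkey : ∀ m : ι, (∑ lam : ↥Ω₁, (if h : ((ω : Fin ℓ → ℕ) + (lam : Fin ℓ → ℕ) ∈ Ω₁)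
        then X (m, (⟨(ω : Fin ℓ → ℕ) + (lam : Fin ℓ → ℕ), h⟩ : ↥Ω₁))
        else (0 : MvPolynomial (ι × ↥Ω₁) F)))
        + (∑ μ ∈ Sbad, X (m, μ)) = f m := by
    intro m
    rw [show f m = ∑ μ : ↥Ω₁, X (m, μ) from by rw [hfdef]]
    rw [← Finset.sum_filter_add_sum_filter_not Finset.univ
      (fun μ : ↥Ω₁ => ∃ lam : ↥Ω₁,
        (ω : Fin ℓ → ℕ) + (lam : Fin ℓ → ℕ) = (μ : Fin ℓ → ℕ))
      (fun μ : ↥Ω₁ => (X (m, μ) : MvPolynomial (ι × ↥Ω₁) F))]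
    congr 1
    rw [← Finset.sum_filter_add_sum_filter_not Finset.univ
      (fun lam : ↥Ω₁ => (ω : Fin ℓ → ℕ) + (lam : Fin ℓ → ℕ) ∈ Ω₁)]
    have hz : ∑ lam ∈ Finset.univ.filter
        (fun lam : ↥Ω₁ => ¬ ((ω : Fin ℓ → ℕ) + (lam : Fin ℓ → ℕ) ∈ Ω₁)),
        (if h : ((ω : Fin ℓ → ℕ) + (lam : Fin ℓ → ℕ) ∈ Ω₁)
          then X (m, (⟨(ω : Fin ℓ → ℕ) + (lam : Fin ℓ → ℕ), h⟩ : ↥Ω₁))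
          else (0 : MvPolynomial (ι × ↥Ω₁) F)) = 0 :=
      Finset.sum_eq_zero (fun lam hlam => dif_neg (Finset.mem_filter.mp hlam).2)
    rw [hz, add_zero]
    refine Finset.sum_bij
      (fun lam hlam => (⟨(ω : Fin ℓ → ℕ) + (lam : Fin ℓ → ℕ),
        (Finset.mem_filter.mp hlam).2⟩ : ↥Ω₁)) ?_ ?_ ?_ ?_
    · intro a ha
      exact Finset.mem_filter.mpr ⟨Finset.mem_univ _, ⟨a, rfl⟩⟩
    · intro a₁ h₁ a₂ h₂ heq
      have h3 : (ω : Fin ℓ → ℕ) + (a₁ : Fin ℓ → ℕ)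
          = (ω : Fin ℓ → ℕ) + (a₂ : Fin ℓ → ℕ) := congrArg Subtype.val heq
      exact Subtype.ext (add_left_cancel h3)
    · intro μ hμ
      obtain ⟨-, lam, hlam⟩ := Finset.mem_filter.mp hμ
      refine ⟨lam, Finset.mem_filter.mpr ⟨Finset.mem_univ _, ?_⟩, Subtype.ext hlam⟩
      rw [hlam]; exact μ.2
    · intro a ha
      rw [dif_pos (Finset.mem_filter.mp ha).2]
  -- step G
  have hG : ∀ j, (∑ lam : ↥Ω₁, V ω (j, lam))
      = (∑ m, (bg.repr ⁅xc ω, bg j⁆ m) • f m)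
        - ∑ m, (bg.repr ⁅xc ω, bg j⁆ m) • (∑ μ ∈ Sbad, X (m, μ)) := by
    intro j
    have h1 : ∀ lam : ↥Ω₁, V ω (j, lam) = ∑ m, (bg.repr ⁅xc ω, bg j⁆ m) •
        (if h : ((ω : Fin ℓ → ℕ) + (lam : Fin ℓ → ℕ) ∈ Ω₁)
          then X (m, (⟨(ω : Fin ℓ → ℕ) + (lam : Fin ℓ → ℕ), h⟩ : ↥Ω₁))
          else (0 : MvPolynomial (ι × ↥Ω₁) F)) := by
      intro lam
      rw [hVdef]
      dsimp only
      split_ifs with h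
      · rfl
      · simp
    calc (∑ lam : ↥Ω₁, V ω (j, lam))
        = ∑ m, (bg.repr ⁅xc ω, bg j⁆ m) •
            (∑ lam : ↥Ω₁, (if h : ((ω : Fin ℓ → ℕ) + (lam : Fin ℓ → ℕ) ∈ Ω₁)
              then X (m, (⟨(ω : Fin ℓ → ℕ) + (lam : Fin ℓ → ℕ), h⟩ : ↥Ω₁))
              else (0 : MvPolynomial (ι × ↥Ω₁) F))) := by
          simp only [h1]
          rw [Finset.sum_comm]
          apply Finset.sum_congr rfl
          intro m _
          rw [Finset.smul_sum]
      _ = ∑ m, (bg.repr ⁅xc ω, bg j⁆ m) • (f m - ∑ μ ∈ Sbad, X (m, μ)) := by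
          apply Finset.sum_congr rfl
          intro m _
          rw [← hkey m]
          congr 1
          abel
      _ = _ := by
          rw [← Finset.sum_sub_distrib]
          apply Finset.sum_congr rfl
          intro m _
          rw [smul_sub]
  -- assemble
  have hfinal : extDer (V ω) (aeval f p)
      = - ∑ j, ∑ m, (bg.repr ⁅xc ω, bg j⁆ m) •
          (aeval f (pderiv j p) * (∑ μ ∈ Sbad, X (m, μ))) := by
    rw [hchain]
    simp only [hG, mul_sub]
    rw [Finset.sum_sub_distrib, ← hinv2, zero_sub]
    congr 1
    apply Finset.sum_congr rfl
    intro j _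
    rw [Finset.mul_sum]
    apply Finset.sum_congr rfl
    intro m _
    rw [mul_smul_comm]
  rw [hfinal, map_neg, neg_eq_zero, map_sum]
  apply Finset.sum_eq_zero
  intro j _
  rw [map_sum]
  apply Finset.sum_eq_zero
  intro m _
  rw [map_smul]
  have hvanish : ∀ μ ∈ Sbad, weightedHomogeneousComponent w (γ + zc (ω : Fin ℓ → ℕ))
      (aeval f (pderiv j p) * X (m, μ)) = 0 := by
    intro μ hμ
    apply weightedHomogeneousComponent_eq_zero'
    intro d hdsup heq
    have hsub := MvPolynomial.support_mul (aeval f (pderiv j p)) (X (m, μ)) hdsup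
    rw [support_X] at hsub
    obtain ⟨d₁, hd₁, d₂, hd₂, hdeq⟩ := Finset.mem_add.mp hsub
    rw [Finset.mem_singleton] at hd₂
    subst hd₂
    have hhom : (aeval f (pderiv j p)).IsHomogeneous (k - 1) :=
      htauhom (k - 1) _ (pderiv_isHomogeneous hp j)
    have hw1 : Finsupp.weight (1 : (ι × ↥Ω₁) → ℕ) d₁ = (k - 1) :=
      hhom (mem_support_iff.mp hd₁)
    have hmem1 : Finsupp.weight w d₁ ∈ nfoldSum Sg (k - 1) :=
      weight_mem_nfoldSum w Sg (fun z => ⟨(z.2 : Fin ℓ → ℕ), z.2.2, rfl⟩) (k - 1) d₁ hw1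
    rw [← hdeq, map_add, weight_single_one] at heq
    have heq2 : Finsupp.weight w d₁ + zc (μ : Fin ℓ → ℕ) = γ + zc (ω : Fin ℓ → ℕ) := heq
    apply hγ
    apply Set.mem_iUnion₂.mpr
    refine ⟨1, Finset.mem_Icc.mpr ⟨le_refl 1, hk⟩, ?_⟩
    refine ⟨zc (μ : Fin ℓ → ℕ) - zc (ω : Fin ℓ → ℕ), ?_, Finsupp.weight w d₁, hmem1, ?_⟩
    · show _ ∈ setAdd Sb (nfoldSum Sb 0)
      refine ⟨zc (μ : Fin ℓ → ℕ) - zc (ω : Fin ℓ → ℕ), ?_, 0, rfl, (add_zero _).symm⟩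
      rw [hSbdef]
      constructor
      · exact ⟨(μ : Fin ℓ → ℕ), μ.2, (ω : Fin ℓ → ℕ), ω.2, rfl⟩
      · rintro ⟨β, hβ, hβeq⟩
        have hμβ : (ω : Fin ℓ → ℕ) + β = (μ : Fin ℓ → ℕ) := by
          funext i
          have hh := congrFun hβeq i
          simp only [zc, Pi.sub_apply, Pi.add_apply] at hh ⊢
          omega
        have hbad := (Finset.mem_filter.mp hμ).2
        exact hbad ⟨⟨β, hβ⟩, hμβ⟩
    · have h4 : γ = Finsupp.weight w d₁ + zc (μ : Fin ℓ → ℕ) - zc (ω : Fin ℓ → ℕ) :=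
        eq_sub_of_add_eq heq2.symm
      rw [h4]
      abel
  rw [Finset.mul_sum, map_sum, Finset.sum_eq_zero hvanish, smul_zero]
end

section
/- If Ω₁ has a greatest element μ, then for every k ≥ 1 one has Ω₁^k \ (−Φ_k) = kμ − Ω₁, where kμ − Ω₁ = {kμ − ω : ω ∈ Ω₁}. -/
/- ### Auxiliary material -/

set_option linter.unusedSectionVars false

def Aset {ℓ : ℕ} (Ω₁ : Finset (Fin ℓ → ℕ)) : Set (Fin ℓ → ℤ) :=
  {δ | ∃ β ∈ Ω₁, δ = zc β}

def Dset {ℓ : ℕ} (Ω₁ : Finset (Fin ℓ → ℕ)) : Set (Fin ℓ → ℤ) :=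
  {δ | (∃ α ∈ Ω₁, ∃ β ∈ Ω₁, δ = zc α - zc β) ∧ ¬(∃ β ∈ Ω₁, δ = zc β)}

lemma zc_inj {ℓ : ℕ} {a b : Fin ℓ → ℕ} (h : zc a = zc b) : a = b := by
  funext t
  have := congrFun h t
  simpa [zc] using this

lemma zc_sub {ℓ : ℕ} (a b : Fin ℓ → ℕ) (h : ∀ t, b t ≤ a t) : zc (a - b) = zc a - zc b := by
  funext t
  simp only [zc, Pi.sub_apply]
  exact_mod_cast Nat.cast_sub (h t)

section Aux

variable {ℓ : ℕ} {Ω₁ : Finset (Fin ℓ → ℕ)} {μ : Fin ℓ → ℕ}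

lemma le_of_mem (hmax : (∀ ω ∈ Ω₁, ω ≤ μ)) {ω : Fin ℓ → ℕ} (hω : ω ∈ Ω₁) : ∀ t, ω t ≤ μ t :=
  fun t => Pi.le_def.mp (hmax ω hω) t

lemma mem_of_add_mem (hstab : (∀ ω γ : Fin ℓ → ℕ, ω ∉ Ω₁ → ω + γ ∉ Ω₁)) {δ β : Fin ℓ → ℕ} (h : δ + β ∈ Ω₁) : δ ∈ Ω₁ := by
  by_contra hδ
  exact hstab δ β hδ h

lemma zero_mem_Ω₁ (hstab : (∀ ω γ : Fin ℓ → ℕ, ω ∉ Ω₁ → ω + γ ∉ Ω₁)) (hμ : μ ∈ Ω₁) : (0 : Fin ℓ → ℕ) ∈ Ω₁ := by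
  by_contra h0
  have := hstab 0 μ h0
  rw [zero_add] at this
  exact this hμ

lemma sub_mem_Ω₁ (hstab : (∀ ω γ : Fin ℓ → ℕ, ω ∉ Ω₁ → ω + γ ∉ Ω₁)) (hμ : μ ∈ Ω₁) (hmax : (∀ ω ∈ Ω₁, ω ≤ μ)) {ω : Fin ℓ → ℕ} (hω : ω ∈ Ω₁) : μ - ω ∈ Ω₁ := by
  have hle := le_of_mem hmax hω
  have heq : (μ - ω) + ω = μ := by
    funext t
    have := hle t
    simp only [Pi.add_apply, Pi.sub_apply]
    omega
  by_contra h
  exact hstab (μ - ω) ω h (by rw [heq]; exact hμ)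

/-- Elements of `A` are pointwise bounded by `μ`. -/
lemma A_ub (hmax : (∀ ω ∈ Ω₁, ω ≤ μ)) {s : Fin ℓ → ℤ} (hs : s ∈ Aset Ω₁) (t : Fin ℓ) : s t ≤ (μ t : ℤ) := by
  obtain ⟨β, hβ, rfl⟩ := hs
  have := le_of_mem hmax hβ t
  simp only [zc]
  exact_mod_cast this

/-- Elements of `D` are pointwise bounded by `μ`. -/
lemma D_ub (hmax : (∀ ω ∈ Ω₁, ω ≤ μ)) {s : Fin ℓ → ℤ} (hs : s ∈ Dset Ω₁) (t : Fin ℓ) : s t ≤ (μ t : ℤ) := by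
  obtain ⟨⟨α, hα, β, hβ, rfl⟩, -⟩ := hs
  have h1 : (α t : ℤ) ≤ (μ t : ℤ) := by exact_mod_cast le_of_mem hmax hα t
  have h2 : (0 : ℤ) ≤ (β t : ℤ) := by positivity
  simp only [Pi.sub_apply, zc]
  linarith

lemma nfold_ub {S : Set (Fin ℓ → ℤ)} (hS : ∀ s ∈ S, ∀ t, s t ≤ (μ t : ℤ)) :
    ∀ n, ∀ x ∈ nfoldSum S n, ∀ t, x t ≤ (n : ℤ) * (μ t : ℤ) := by
  intro n
  induction n with
  | zero =>
      intro x hx t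
      have : x = 0 := hx
      simp [this]
  | succ n ih =>
      rintro x ⟨a, ha, b, hb, rfl⟩ t
      have h1 := hS a ha t
      have h2 := ih b hb t
      push_cast
      simp only [Pi.add_apply]
      nlinarith

/-- `nμ - ω ∈ A^n` for `n ≥ 1` and `ω ∈ Ω₁`. -/
lemma powMem6 (hstab : (∀ ω γ : Fin ℓ → ℕ, ω ∉ Ω₁ → ω + γ ∉ Ω₁)) (hμ : μ ∈ Ω₁) (hmax : (∀ ω ∈ Ω₁, ω ≤ μ)) : ∀ n : ℕ, ∀ ω ∈ Ω₁, ((n + 1) • zc μ - zc ω) ∈ nfoldSum (Aset Ω₁) (n + 1) := by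
  intro n
  induction n with
  | zero =>
      intro ω hω
      refine ⟨zc (μ - ω), ⟨μ - ω, sub_mem_Ω₁ hstab hμ hmax hω, rfl⟩, 0, rfl, ?_⟩
      rw [zc_sub μ ω (le_of_mem hmax hω)]
      funext t
      simp only [Pi.add_apply, Pi.sub_apply, Pi.smul_apply, smul_eq_mul, zc, Pi.zero_apply]
      push_cast
      ring
  | succ n ih =>
      intro ω hω
      refine ⟨zc μ, ⟨μ, hμ, rfl⟩, (n + 1) • zc μ - zc ω, ih ω hω, ?_⟩
      funext t
      simp only [Pi.add_apply, Pi.sub_apply, Pi.smul_apply, smul_eq_mul, zc]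
      push_cast
      ring

/-- Key dichotomy: every element of `A^{n+1}` is `(n+1)μ - ω` for some `ω ∈ Ω₁`,
or lies in `D + A^n`. -/
lemma key6 (hstab : (∀ ω γ : Fin ℓ → ℕ, ω ∉ Ω₁ → ω + γ ∉ Ω₁)) (hμ : μ ∈ Ω₁) (hmax : (∀ ω ∈ Ω₁, ω ≤ μ)) : ∀ n : ℕ, ∀ x ∈ nfoldSum (Aset Ω₁) (n + 1),
    (∃ ω ∈ Ω₁, x = (n + 1) • zc μ - zc ω) ∨ x ∈ setAdd (Dset Ω₁) (nfoldSum (Aset Ω₁) n) := by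
  intro n
  induction n with
  | zero =>
      rintro x ⟨a, ⟨β, hβ, rfl⟩, b, hb, rfl⟩
      have hb' : b = 0 := hb
      left
      refine ⟨μ - β, sub_mem_Ω₁ hstab hμ hmax hβ, ?_⟩
      rw [hb', zc_sub μ β (le_of_mem hmax hβ)]
      funext t
      simp only [Pi.add_apply, Pi.sub_apply, Pi.smul_apply, smul_eq_mul, zc, Pi.zero_apply]
      push_cast
      ring
  | succ n ih =>
      rintro x ⟨a, ⟨β, hβ, rfl⟩, y, hy, rfl⟩
      rcases ih y hy with ⟨ω, hω, rfl⟩ | ⟨d, hd, z, hz, rfl⟩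
      · -- y = (n+1)μ - ω
        have hγ : μ - β ∈ Ω₁ := sub_mem_Ω₁ hstab hμ hmax hβ
        have hβμ := le_of_mem hmax hβ
        by_cases hω' : ω + (μ - β) ∈ Ω₁
        · left
          refine ⟨ω + (μ - β), hω', ?_⟩
          funext t
          simp only [Pi.add_apply, Pi.sub_apply, Pi.smul_apply, smul_eq_mul, zc]
          have := hβμ t
          push_cast [Nat.sub_add_cancel]
          rw [Nat.cast_sub (hβμ t)]
          ring
        · right
          refine ⟨zc β - zc ω, ⟨⟨β, hβ, ω, hω, rfl⟩, ?_⟩,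
            (n + 1) • zc μ - zc 0,
            by simpa using powMem6 hstab hμ hmax n 0 (zero_mem_Ω₁ hstab hμ), ?_⟩
          · rintro ⟨δ, hδ, hδeq⟩
            have hβeq : β = ω + δ := by
              apply zc_inj
              funext t
              have := congrFun hδeq t
              simp only [Pi.sub_apply, zc] at this
              simp only [Pi.add_apply, zc]
              push_cast
              linarith
            have hδμ := le_of_mem hmax hδ
            have hμδ : ω + (μ - β) = μ - δ := by
              funext t
              have h1 := congrFun hβeq t
              have h2 := hβμ t
              have h3 := hδμ t
              simp only [Pi.add_apply, Pi.sub_apply] at *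
              omega
            rw [hμδ] at hω'
            exact hω' (sub_mem_Ω₁ hstab hμ hmax hδ)
          · funext t
            simp only [Pi.add_apply, Pi.sub_apply, Pi.smul_apply, smul_eq_mul, zc,
              Pi.zero_apply]
            push_cast
            ring
      · -- y ∈ D + A^n
        exact Or.inr ⟨d, hd, zc β + z, ⟨zc β, ⟨β, hβ, rfl⟩, z, hz, rfl⟩, by abel⟩

/-- `kμ - ω` is not in any `D^j + A^{k-j}` with `1 ≤ j ≤ k`. -/
lemma not_mem_phi6 (hstab : (∀ ω γ : Fin ℓ → ℕ, ω ∉ Ω₁ → ω + γ ∉ Ω₁)) (hμ : μ ∈ Ω₁) (hmax : (∀ ω ∈ Ω₁, ω ≤ μ)) {k : ℕ} {ω : Fin ℓ → ℕ} (hω : ω ∈ Ω₁) {j : ℕ} (hj1 : 1 ≤ j) (hjk : j ≤ k) :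
    (k • zc μ - zc ω) ∉ setAdd (nfoldSum (Dset Ω₁) j) (nfoldSum (Aset Ω₁) (k - j)) := by
  rintro ⟨u, hu, v, hv, heq⟩
  obtain ⟨m, rfl⟩ : ∃ m, j = m + 1 := ⟨j - 1, by omega⟩
  obtain ⟨d, hd, u', hu', rfl⟩ := hu
  have hub' : ∀ t, u' t ≤ (m : ℤ) * (μ t : ℤ) :=
    nfold_ub (fun s hs t => D_ub hmax hs t) m u' hu'
  have hvb : ∀ t, v t ≤ ((k - (m + 1) : ℕ) : ℤ) * (μ t : ℤ) :=
    nfold_ub (fun s hs t => A_ub hmax hs t) (k - (m + 1)) v hv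
  obtain ⟨⟨α, hα, β, hβ, rfl⟩, hdA⟩ := hd
  have hge : ∀ t, β t ≤ α t := by
    intro t
    have h1 := congrFun heq t
    have h2 := hub' t
    have h3 := hvb t
    have h4 : ((k - (m + 1) : ℕ) : ℤ) = (k : ℤ) - (m : ℤ) - 1 := by
      push_cast [Nat.cast_sub hjk]
      ring
    have h5 : (ω t : ℤ) ≤ (μ t : ℤ) := by exact_mod_cast le_of_mem hmax hω t
    simp only [Pi.sub_apply, Pi.add_apply, Pi.smul_apply, smul_eq_mul, nsmul_eq_mul, Pi.mul_apply, Pi.natCast_apply, zc] at h1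
    rw [h4] at h3
    have : (β t : ℤ) ≤ (α t : ℤ) := by nlinarith [h1, h2, h3, h5]
    exact_mod_cast this
  apply hdA
  refine ⟨α - β, ?_, (zc_sub α β hge).symm⟩
  apply mem_of_add_mem hstab (β := β)
  have heq2 : (α - β) + β = α := by
    funext t
    have := hge t
    simp only [Pi.add_apply, Pi.sub_apply]
    omega
  rw [heq2]
  exact hα

end Aux

/-- If `Ω₁` has a greatest element `μ`, then for every `k ≥ 1` one has
`Ω₁^k \ (-Φ_k) = kμ - Ω₁ = {kμ - ω : ω ∈ Ω₁}`, where
`-Φ_k = ⋃_{j=1}^{k} (((Ω₁ - Ω₁) \ Ω₁)^j + Ω₁^{k-j})`, all viewed as subsets of `ℤ^ℓ`. -/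
theorem statement6 {ℓ : ℕ} (Ω₁ : Finset (Fin ℓ → ℕ))
    (hstab : ∀ ω γ : Fin ℓ → ℕ, ω ∉ Ω₁ → ω + γ ∉ Ω₁)
    (μ : Fin ℓ → ℕ) (hμ : μ ∈ Ω₁) (hmax : ∀ ω ∈ Ω₁, ω ≤ μ)
    (k : ℕ) (hk : 1 ≤ k) :
    nfoldSum {δ : Fin ℓ → ℤ | ∃ β ∈ Ω₁, δ = zc β} k \
        (⋃ j ∈ Finset.Icc 1 k, setAdd
          (nfoldSum {δ : Fin ℓ → ℤ | (∃ α ∈ Ω₁, ∃ β ∈ Ω₁, δ = zc α - zc β)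
              ∧ ¬(∃ β ∈ Ω₁, δ = zc β)} j)
          (nfoldSum {δ : Fin ℓ → ℤ | ∃ β ∈ Ω₁, δ = zc β} (k - j)))
      = {δ : Fin ℓ → ℤ | ∃ ω ∈ Ω₁, δ = k • zc μ - zc ω} := by
  obtain ⟨n, rfl⟩ : ∃ n, k = n + 1 := ⟨k - 1, by omega⟩
  show nfoldSum (Aset Ω₁) (n + 1) \
      (⋃ j ∈ Finset.Icc 1 (n + 1),
        setAdd (nfoldSum (Dset Ω₁) j) (nfoldSum (Aset Ω₁) (n + 1 - j)))
    = {δ : Fin ℓ → ℤ | ∃ ω ∈ Ω₁, δ = (n + 1) • zc μ - zc ω}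
  ext x
  simp only [Set.mem_diff, Set.mem_iUnion, Set.mem_setOf_eq, Finset.mem_Icc, exists_prop]
  constructor
  · rintro ⟨hxA, hxU⟩
    rcases key6 hstab hμ hmax n x hxA with h | ⟨d, hd, z, hz, rfl⟩
    · exact h
    · exfalso
      apply hxU
      refine ⟨1, ⟨le_refl 1, by omega⟩, d, ⟨d, hd, 0, rfl, (add_zero d).symm⟩, z, ?_, rfl⟩
      simpa using hz
  · rintro ⟨ω, hω, rfl⟩
    refine ⟨powMem6 hstab hμ hmax n ω hω, ?_⟩
    rintro ⟨j, ⟨hj1, hjk⟩, hmem⟩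
    exact not_mem_phi6 hstab hμ hmax hω hj1 hjk hmem
end
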